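/- arXiv:1204.6233 — 2 statements merged into one kernel-verified Lean document; each statement's English description precedes it below -/
import Mathlib

section
/- For every integer t ≥ 0, every graph that contains a subdivision of the (2t+2)-wall as a subgraph has treewidth at least t+1. -/
/-- `twLE G t` means the treewidth of `G` is at most `t`. -/
def twLE {α : Type} (G : SimpleGraph α) (t : ℕ) : Prop :=
  ∃ (ι : Type) (T : SimpleGraph ι) (bag : ι → Finset α),
    T.IsTree ∧
    (∀ u v : α, G.Adj u v → ∃ i, u ∈ bag i ∧ v ∈ bag i) ∧
    (∀ v : α, (T.induce {i | v ∈ bag i}).Connected) ∧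
    (∀ i, (bag i).card ≤ t + 1)

def wallRel (r : ℕ) (p q : ℕ × ℕ) : Prop :=
  1 ≤ p.1 ∧ p.1 ≤ r ∧ 1 ≤ p.2 ∧ p.2 ≤ r ∧
  1 ≤ q.1 ∧ q.1 ≤ r ∧ 1 ≤ q.2 ∧ q.2 ≤ r ∧
  ((p.2 = q.2 ∧ q.1 = p.1 + 1) ∨ (p.1 = q.1 ∧ q.2 = p.2 + 1 ∧ Even (p.1 + p.2)))

def wallGraph (r : ℕ) : SimpleGraph (ℕ × ℕ) := SimpleGraph.fromRel (wallRel r)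

def wallVerts (r : ℕ) : Set (ℕ × ℕ) := {p | 1 ≤ p.1 ∧ p.1 ≤ r ∧ 1 ≤ p.2 ∧ p.2 ≤ r}

/-- The `r`-wall. -/
def Wall (r : ℕ) : SimpleGraph (wallVerts r) := (wallGraph r).induce (wallVerts r)

/-- `W` is (exactly) a subdivision of `H`. -/
def IsSubdivisionOf {γ β : Type} (W : SimpleGraph γ) (H : SimpleGraph β) : Prop :=
  ∃ (b : β → γ) (p : ∀ u v : β, H.Adj u v → W.Walk (b u) (b v)),
    Function.Injective b ∧
    (∀ (u v : β) (h : H.Adj u v), (p u v h).IsPath) ∧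
    (∀ (u v : β) (h : H.Adj u v), p v u h.symm = (p u v h).reverse) ∧
    (∀ (u v : β) (h : H.Adj u v) (x : β), b x ∈ (p u v h).support → x = u ∨ x = v) ∧
    (∀ (u v : β) (h : H.Adj u v) (u' v' : β) (h' : H.Adj u' v'), s(u, v) ≠ s(u', v') →
      ∀ w : γ, w ∈ (p u v h).support → w ∈ (p u' v' h').support → w = b u ∨ w = b v) ∧
    (∀ w : γ, ∃ (u v : β) (h : H.Adj u v), w ∈ (p u v h).support) ∧
    (∀ e ∈ W.edgeSet, ∃ (u v : β) (h : H.Adj u v), e ∈ (p u v h).edges)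

/-- `G` contains `H` as a topological minor. -/
def containsSubdivision {α β : Type} (G : SimpleGraph α) (H : SimpleGraph β) : Prop :=
  ∃ W : G.Subgraph, IsSubdivisionOf W.coe H

noncomputable def nb (t : ℕ) : ℕ := ⌈(16 : ℝ) * ((t : ℝ) + 2) * Real.logb 2 ((t : ℝ) + 2)⌉₊
noncomputable def sameF (k t : ℕ) : ℕ := 3 * (nb t) ^ 2 * t * 2 ^ (2 * k)
noncomputable def obsF (k t : ℕ) : ℕ := 2 ^ k * sameF k t + k
noncomputable def wallF (k t : ℕ) : ℕ := (2 * t + 2) * (1 + ⌈Real.sqrt (obsF k t)⌉₊)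

structure CNF (V : Type) where
  ι : Type
  cls : Finset ι
  lit : ι → Finset (V × Bool)
  ok : ∀ i ∈ cls, ∀ v : V, ¬((v, true) ∈ lit i ∧ (v, false) ∈ lit i)

def CNF.vars {V : Type} [DecidableEq V] (F : CNF V) : Finset V :=
  F.cls.biUnion (fun i => (F.lit i).image Prod.fst)

def CNF.reduce {V : Type} [DecidableEq V] (F : CNF V) (X : Finset V) (τ : V → Bool) : CNF V where
  ι := F.ι
  cls := F.cls.filter (fun i => ∀ l ∈ F.lit i, l.1 ∈ X → τ l.1 ≠ l.2)
  lit := fun i => (F.lit i).filter (fun l => l.1 ∉ X)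
  ok := by
    intro i hi v hv
    exact F.ok i (Finset.mem_of_mem_filter i hi) v
      ⟨(Finset.mem_filter.mp hv.1).1, (Finset.mem_filter.mp hv.2).1⟩

def CNF.inc {V : Type} (F : CNF V) : SimpleGraph (V ⊕ F.ι) :=
  SimpleGraph.fromRel (fun a b =>
    match a, b with
    | Sum.inl x, Sum.inr i => i ∈ F.cls ∧ ((x, true) ∈ F.lit i ∨ (x, false) ∈ F.lit i)
    | _, _ => False)

/-- The vertices of `inc F` surviving the application of the partial assignment `τ` on `X`. -/
def CNF.surv {V : Type} (F : CNF V) (X : Finset V) (τ : V → Bool) : Set (V ⊕ F.ι) :=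
  {a | match a with
       | Sum.inl x => x ∉ X
       | Sum.inr i => ∀ l ∈ F.lit i, l.1 ∈ X → τ l.1 ≠ l.2}

def CNF.strongBackdoor {V : Type} [DecidableEq V] (F : CNF V) (t : ℕ) (B : Finset V) : Prop :=
  B ⊆ F.vars ∧ ∀ τ : V → Bool, twLE (F.reduce B τ).inc t

def CNF.delete {V : Type} [DecidableEq V] (F : CNF V) (B : Finset V) : CNF V where
  ι := F.ι
  cls := F.cls
  lit := fun i => (F.lit i).filter (fun l => l.1 ∉ B)
  ok := by
    intro i hi v hv
    exact F.ok i hi v ⟨(Finset.mem_filter.mp hv.1).1, (Finset.mem_filter.mp hv.2).1⟩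

noncomputable def CNF.count {V : Type} [DecidableEq V] (F : CNF V) : ℕ :=
  Nat.card {σ : {x // x ∈ F.vars} → Bool //
    ∀ i ∈ F.cls, ∃ l ∈ F.lit i, ∃ h : l.1 ∈ F.vars, σ ⟨l.1, h⟩ = l.2}

def ValidOT {α κ : Type} (G : SimpleGraph α) (W : G.Subgraph) (Z : Finset α) (t : ℕ)
    (Q : Finset κ) (N : κ → Finset α) (P : Set (Set α)) (R : κ → Set α) : Prop :=
  (∀ A ∈ P, A ⊆ W.verts ∧ (W.induce A).Connected) ∧
  (∀ A ∈ P, ∀ A' ∈ P, A ≠ A' → Disjoint A A') ∧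
  (⋃ A ∈ P, A) = W.verts ∧
  (∀ q ∈ Q, R q ∈ P) ∧
  (∀ q ∈ Q, (N q : Set α) ⊆ (Z : Set α)) ∧
  (∀ q ∈ Q, ∀ z ∈ N q, z ∉ R q ∧ ∃ w ∈ R q, G.Adj z w) ∧
  (∀ q ∈ Q, ∃ z ∈ N q, ∀ q' ∈ Q, q' ≠ q → R q' = R q → z ∉ N q') ∧
  (∀ z ∈ Z, ∃ q ∈ Q, z ∈ N q) ∧
  (∀ q ∈ Q, nb t ≤ (N q).card ∧ (N q).card ≤ 3 * nb t) ∧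
  (∀ q ∈ Q, ∀ v ∈ R q, ∀ v' ∈ R q,
    (∃ z ∈ Z, G.Adj v z ∧ z ∉ N q) → (∃ z ∈ Z, G.Adj v' z ∧ z ∉ N q) → v = v')

def HasMinor {α β : Type} (G : SimpleGraph α) (H : SimpleGraph β) : Prop :=
  ∃ C : β → Set α,
    (∀ u, (C u).Nonempty) ∧
    (∀ u, (G.induce (C u)).Connected) ∧
    (∀ u v, u ≠ v → Disjoint (C u) (C v)) ∧
    (∀ u v, H.Adj u v → ∃ a ∈ C u, ∃ b ∈ C v, G.Adj a b)

namespace Stmt16Aux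
open SimpleGraph Walk

variable {ι : Type} {T : SimpleGraph ι}

/-- Path-closed nonempty set (a "subtree" of `T`). -/
def PC (T : SimpleGraph ι) (U : Set ι) : Prop :=
  U.Nonempty ∧ ∀ u v : ι, u ∈ U → v ∈ U →
    ∀ w : T.Walk u v, w.IsPath → ∀ x ∈ w.support, x ∈ U

lemma exists_path (hT : T.IsTree) (a b : ι) : ∃ w : T.Walk a b, w.IsPath := by
  classical
  exact ⟨(hT.isConnected.preconnected a b).some.bypass, Walk.bypass_isPath _⟩

lemma path_eq (hT : T.IsTree) {a b : ι} {w w' : T.Walk a b} (hw : w.IsPath) (hw' : w'.IsPath) :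
    w = w' := by
  exact congrArg Subtype.val (hT.IsAcyclic.path_unique ⟨w, hw⟩ ⟨w', hw'⟩)

/-- splitting a walk at the last vertex belonging to `S`. -/
lemma split_last {a b : ι} (S : Set ι) :
    ∀ (p : T.Walk a b), (∃ y ∈ p.support, y ∈ S) →
      ∃ (m : ι) (w₁ : T.Walk a m) (w₂ : T.Walk m b),
        w₁.append w₂ = p ∧ m ∈ S ∧ ∀ x ∈ w₂.support, x ∈ S → x = m := by
  intro p
  induction p with
  | nil =>
    rintro ⟨y, hy, hyS⟩
    simp only [Walk.support_nil, List.mem_singleton] at hy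
    subst hy
    exact ⟨y, Walk.nil, Walk.nil, by simp, hyS, fun x hx _ => by simpa using hx⟩
  | @cons u v b h q ih =>
    rintro ⟨y, hy, hyS⟩
    by_cases hq : ∃ z ∈ q.support, z ∈ S
    · obtain ⟨m, w₁, w₂, happ, hmS, hlast⟩ := ih hq
      exact ⟨m, Walk.cons h w₁, w₂, by rw [Walk.cons_append, happ], hmS, hlast⟩
    · push_neg at hq
      have hyu : y = u := by
        rcases (Walk.mem_support_iff _).mp hy with h1 | h2
        · exact h1
        · exact absurd hyS (hq y (by simpa using h2))
      subst hyu
      refine ⟨y, Walk.nil, Walk.cons h q, by simp, hyS, ?_⟩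
      intro x hx hxS
      rcases (Walk.mem_support_iff _).mp hx with h1 | h2
      · exact h1
      · exact absurd hxS (hq x (by simpa using h2))

/-- the tree tripod/median: a vertex on all three paths. -/
lemma tripod (hT : T.IsTree) (a b c : ι) :
    ∃ m : ι,
      (∀ w : T.Walk a b, w.IsPath → m ∈ w.support) ∧
      (∀ w : T.Walk a c, w.IsPath → m ∈ w.support) ∧
      (∀ w : T.Walk b c, w.IsPath → m ∈ w.support) := by
  classical
  obtain ⟨p, hp⟩ := exists_path hT a b
  obtain ⟨q, hq⟩ := exists_path hT a c
  obtain ⟨m, w₁, w₂, happ, hmq, hlast⟩ :=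
    split_last {x | x ∈ q.support} p ⟨a, p.start_mem_support, q.start_mem_support⟩
  have hw2 : w₂.IsPath := by
    have : (w₁.append w₂).IsPath := happ ▸ hp
    exact Walk.IsPath.of_append_right this
  have hmp : m ∈ p.support := by
    rw [← happ]
    exact Walk.subset_support_append_left _ _ (Walk.end_mem_support w₁)
  -- construct the b-c path through m
  have hdrop : (q.dropUntil m hmq).IsPath := hq.dropUntil hmq
  set w' : T.Walk b c := w₂.reverse.append (q.dropUntil m hmq) with hw'
  have hw'path : w'.IsPath := by
    rw [hw', Walk.isPath_def, Walk.support_append, List.nodup_append]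
    refine ⟨by rw [Walk.support_reverse]; exact List.nodup_reverse.mpr hw2.support_nodup,
      (hdrop.support_nodup).tail, ?_⟩
    intro x hx1 y hx2 hxy; subst hxy
    have hx1' : x ∈ w₂.support := by
      rw [Walk.support_reverse] at hx1; exact List.mem_reverse.mp hx1
    have hx2' : x ∈ (q.dropUntil m hmq).support := List.tail_subset _ hx2
    have hxq : x ∈ q.support := Walk.support_dropUntil_subset _ _ hx2'
    have hxm : x = m := hlast x hx1' hxq
    have hnd := hdrop.support_nodup
    rw [Walk.support_eq_cons (q.dropUntil m hmq)] at hnd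
    exact (List.nodup_cons.mp hnd).1 (hxm ▸ hx2)
  refine ⟨m, ?_, ?_, ?_⟩
  · intro w hw; rw [path_eq hT hw hp]; exact hmp
  · intro w hw; rw [path_eq hT hw hq]; exact hmq
  · intro w hw
    rw [path_eq hT hw hw'path, hw']
    exact Walk.subset_support_append_left _ _ (by
      rw [Walk.support_reverse]
      exact List.mem_reverse.mpr (Walk.start_mem_support w₂))

lemma pc_inter {U V : Set ι} (hU : PC T U) (hV : PC T V) (hne : (U ∩ V).Nonempty) :
    PC T (U ∩ V) :=
  ⟨hne, fun u v hu hv w hw x hx =>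
    ⟨hU.2 u v hu.1 hv.1 w hw x hx, hV.2 u v hu.2 hv.2 w hw x hx⟩⟩

lemma pc_triple (hT : T.IsTree) {U V W : Set ι} (hU : PC T U) (hV : PC T V) (hW : PC T W)
    (hUV : (U ∩ V).Nonempty) (hUW : (U ∩ W).Nonempty) (hVW : (V ∩ W).Nonempty) :
    (U ∩ V ∩ W).Nonempty := by
  obtain ⟨a, haU, haV⟩ := hUV
  obtain ⟨b, hbU, hbW⟩ := hUW
  obtain ⟨c, hcV, hcW⟩ := hVW
  obtain ⟨m, hab, hac, hbc⟩ := tripod hT a b c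
  obtain ⟨p, hp⟩ := exists_path hT a b
  obtain ⟨q, hq⟩ := exists_path hT a c
  obtain ⟨w, hw⟩ := exists_path hT b c
  exact ⟨m, ⟨hU.2 a b haU hbU p hp m (hab p hp), hV.2 a c haV hcV q hq m (hac q hq)⟩,
    hW.2 b c hbW hcW w hw m (hbc w hw)⟩

lemma helly_aux (hT : T.IsTree) :
    ∀ (n : ℕ) (l : List (Set ι)), l.length = n → (∀ U ∈ l, PC T U) →
      (∀ U ∈ l, ∀ V ∈ l, (U ∩ V).Nonempty) → l ≠ [] → ∃ m, ∀ U ∈ l, m ∈ U := by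
  intro n
  induction n with
  | zero => intro l hl _ _ hne; exact absurd (List.length_eq_zero_iff.mp hl) hne
  | succ n ih =>
    intro l hl hpc hint hne
    match l with
    | [U] =>
      obtain ⟨m, hm⟩ := (hpc U (by simp)).1
      exact ⟨m, by simpa using hm⟩
    | U :: V :: rest =>
      have hUV : (U ∩ V).Nonempty := hint U (by simp) V (by simp)
      have hUVpc : PC T (U ∩ V) := pc_inter (hpc U (by simp)) (hpc V (by simp)) hUV
      obtain ⟨m, hm⟩ := ih ((U ∩ V) :: rest) (by simpa using hl)
        (by
          intro X hX
          rcases List.mem_cons.mp hX with h | h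
          · exact h ▸ hUVpc
          · exact hpc X (by simp [h]))
        (by
          intro X hX Y hY
          rcases List.mem_cons.mp hX with h | h <;> rcases List.mem_cons.mp hY with h' | h'
          · subst h; subst h'; exact ⟨hUV.choose, hUV.choose_spec, hUV.choose_spec⟩
          · subst h
            exact pc_triple hT (hpc U (by simp)) (hpc V (by simp)) (hpc Y (by simp [h']))
              hUV (hint U (by simp) Y (by simp [h'])) (hint V (by simp) Y (by simp [h']))
          · subst h'
            obtain ⟨x, ⟨hx1, hx2⟩, hx3⟩ := pc_triple hT (hpc U (by simp)) (hpc V (by simp))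
              (hpc X (by simp [h])) hUV (hint U (by simp) X (by simp [h]))
              (hint V (by simp) X (by simp [h]))
            exact ⟨x, hx3, hx1, hx2⟩
          · exact hint X (by simp [h]) Y (by simp [h']))
        (by simp)
      refine ⟨m, ?_⟩
      intro X hX
      rcases List.mem_cons.mp hX with h | h
      · exact h ▸ (hm (U ∩ V) (by simp)).1
      · rcases List.mem_cons.mp h with h' | h'
        · exact h' ▸ (hm (U ∩ V) (by simp)).2
        · exact hm X (by simp [h'])

lemma helly (hT : T.IsTree) (l : List (Set ι)) (hpc : ∀ U ∈ l, PC T U)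
    (hint : ∀ U ∈ l, ∀ V ∈ l, (U ∩ V).Nonempty) (hne : l ≠ []) : ∃ m, ∀ U ∈ l, m ∈ U :=
  helly_aux hT l.length l rfl hpc hint hne


section Decomp

variable {α : Type} {G : SimpleGraph α} {T : SimpleGraph ι} {bag : ι → Finset α}

/-- Hom from an induced subgraph into the ambient graph. -/
def inducedHom (G : SimpleGraph α) (S : Set α) : G.induce S →g G where
  toFun := Subtype.val
  map_rel' := fun h => h

lemma pc_of_connected (hT : T.IsTree) {U : Set ι} (h : (T.induce U).Connected) : PC T U := by
  classical
  constructor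
  · obtain ⟨⟨x, hx⟩⟩ := h.nonempty
    exact ⟨x, hx⟩
  · intro u v hu hv w hw
    obtain ⟨w₀⟩ := h.preconnected ⟨u, hu⟩ ⟨v, hv⟩
    have hsub : ∀ x ∈ (w₀.map (inducedHom T U)).support, x ∈ U := by
      intro x hx
      rw [Walk.support_map] at hx
      obtain ⟨y, _, rfl⟩ := List.mem_map.mp hx
      exact y.2
    have hbp : (w₀.map (inducedHom T U)).bypass.IsPath := Walk.bypass_isPath _
    have : w = (w₀.map (inducedHom T U)).bypass := path_eq hT hw hbp
    intro x hx
    rw [this] at hx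
    exact hsub x (Walk.support_bypass_subset _ hx)

/-- The set of tree nodes whose bag meets `E`. -/
def hitSet (bag : ι → Finset α) (E : Set α) : Set ι := {i | ∃ v ∈ E, v ∈ bag i}

lemma pc_hitSet (hT : T.IsTree)
    (hedge : ∀ u v : α, G.Adj u v → ∃ i, u ∈ bag i ∧ v ∈ bag i)
    (hconn : ∀ v : α, (T.induce {i | v ∈ bag i}).Connected)
    {E : Set α} (hE : (G.induce E).Connected) : PC T (hitSet bag E) := by
  classical
  have hvpc : ∀ v : α, PC T {i | v ∈ bag i} := fun v => pc_of_connected hT (hconn v)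
  constructor
  · obtain ⟨⟨v, hv⟩⟩ := hE.nonempty
    obtain ⟨⟨i, hi⟩, _⟩ := hvpc v
    exact ⟨i, v, hv, hi⟩
  · have claim : ∀ (a c : ↥E) (ω : (G.induce E).Walk a c) (i j : ι)
        (_ : a.1 ∈ bag i) (_ : c.1 ∈ bag j) (w : T.Walk i j), w.IsPath →
        ∀ x ∈ w.support, x ∈ hitSet bag E := by
      intro a c ω
      induction ω with
      | nil =>
        intro i j hiu hjv w hw x hx
        rename_i a0
        exact ⟨a0.1, a0.2, (hvpc a0.1).2 i j hiu hjv w hw x hx⟩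
      | @cons a c d hadj ω ih =>
        intro i j hiu hjv w hw x hx
        obtain ⟨k, hk1, hk2⟩ := hedge a.1 c.1 hadj
        obtain ⟨wkj, hwkj⟩ := exists_path hT k j
        obtain ⟨wik, hwik⟩ := exists_path hT i k
        have hwbp : (wik.append wkj).bypass.IsPath := Walk.bypass_isPath _
        have hweq : w = (wik.append wkj).bypass := path_eq hT hw hwbp
        rw [hweq] at hx
        have hx2 := Walk.support_bypass_subset _ hx
        rcases (Walk.mem_support_append_iff wik wkj).mp hx2 with h1 | h2
        · exact ⟨a.1, a.2, (hvpc a.1).2 i k hiu hk1 wik hwik x h1⟩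
        · exact ih k j hk2 hjv wkj hwkj x h2
    intro i j hi hj w hw
    obtain ⟨u, huE, hiu⟩ := hi
    obtain ⟨v, hvE, hjv⟩ := hj
    obtain ⟨ω⟩ := hE.preconnected ⟨u, huE⟩ ⟨v, hvE⟩
    exact claim ⟨u, huE⟩ ⟨v, hvE⟩ ω i j hiu hjv w hw

/-- any "bramble" (pairwise-touching family of connected sets) is hit by one bag. -/
lemma bramble_bag (hT : T.IsTree)
    (hedge : ∀ u v : α, G.Adj u v → ∃ i, u ∈ bag i ∧ v ∈ bag i)
    (hconn : ∀ v : α, (T.induce {i | v ∈ bag i}).Connected)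
    (L : List (Set α)) (hL : ∀ E ∈ L, (G.induce E).Connected)
    (htouch : ∀ E ∈ L, ∀ F ∈ L,
      (E ∩ F).Nonempty ∨ ∃ x ∈ E, ∃ y ∈ F, G.Adj x y)
    (hne : L ≠ []) :
    ∃ i : ι, ∀ E ∈ L, ∃ v ∈ E, v ∈ bag i := by
  have hvpc : ∀ v : α, PC T {i | v ∈ bag i} := fun v =>
    pc_of_connected hT (hconn v)
  obtain ⟨m, hm⟩ := helly hT (L.map (hitSet bag))
    (by
      rintro U hU
      obtain ⟨E, hE, rfl⟩ := List.mem_map.mp hU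
      exact pc_hitSet hT hedge hconn (hL E hE))
    (by
      rintro U hU V hV
      obtain ⟨E, hE, rfl⟩ := List.mem_map.mp hU
      obtain ⟨F, hF, rfl⟩ := List.mem_map.mp hV
      rcases htouch E hE F hF with ⟨v, hvE, hvF⟩ | ⟨x, hx, y, hy, hxy⟩
      · obtain ⟨⟨i, hi⟩, _⟩ := hvpc v
        exact ⟨i, ⟨v, hvE, hi⟩, ⟨v, hvF, hi⟩⟩
      · obtain ⟨k, hk1, hk2⟩ := hedge x y hxy
        exact ⟨k, ⟨x, hx, hk1⟩, ⟨y, hy, hk2⟩⟩)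
    (by simpa using hne)
  exact ⟨m, fun E hE => hm (hitSet bag E) (List.mem_map_of_mem hE)⟩

end Decomp


section Expand

variable {α : Type} {G : SimpleGraph α} {W : G.Subgraph} {r : ℕ}

structure SubdivData (G : SimpleGraph α) (W : G.Subgraph) (r : ℕ) where
  b : ↥(wallVerts r) → ↥W.verts
  p : ∀ u v, (Wall r).Adj u v → W.coe.Walk (b u) (b v)
  inj : Function.Injective b
  ispath : ∀ u v h, (p u v h).IsPath
  psymm : ∀ u v (h : (Wall r).Adj u v), p v u h.symm = (p u v h).reverse
  branch : ∀ u v h x, b x ∈ (p u v h).support → x = u ∨ x = v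
  pdisj : ∀ u v h u' v' h', s(u,v) ≠ s(u',v') → ∀ w, w ∈ (p u v h).support →
    w ∈ (p u' v' h').support → w = b u ∨ w = b v

lemma wall_ne {u v : ↥(wallVerts r)} (h : (Wall r).Adj u v) : u ≠ v := by
  rintro rfl
  exact (SimpleGraph.irrefl _) h

namespace SubdivData

variable (D : SubdivData G W r)

open Classical in
noncomputable def ES (u v : ↥(wallVerts r)) : Set α :=
  if h : (Wall r).Adj u v then Subtype.val '' {x | x ∈ (D.p u v h).support} else ∅

lemma ES_eq {u v : ↥(wallVerts r)} (h : (Wall r).Adj u v) :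
    D.ES u v = Subtype.val '' {x | x ∈ (D.p u v h).support} := by
  rw [ES, dif_pos h]

lemma mem_ES_left {u v : ↥(wallVerts r)} (h : (Wall r).Adj u v) :
    (D.b u : α) ∈ D.ES u v := by
  rw [D.ES_eq h]
  exact ⟨D.b u, (D.p u v h).start_mem_support, rfl⟩

lemma mem_ES_right {u v : ↥(wallVerts r)} (h : (Wall r).Adj u v) :
    (D.b v : α) ∈ D.ES u v := by
  rw [D.ES_eq h]
  exact ⟨D.b v, (D.p u v h).end_mem_support, rfl⟩

lemma ES_symm (u v : ↥(wallVerts r)) : D.ES u v = D.ES v u := by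
  by_cases h : (Wall r).Adj u v
  · rw [D.ES_eq h, D.ES_eq h.symm, D.psymm u v h]
    ext a
    simp [Walk.support_reverse]
  · rw [ES, dif_neg h, ES, dif_neg (fun h' => h h'.symm)]

lemma walk_image_conn {x y : ↥W.verts} (q : W.coe.Walk x y) :
    (G.induce (Subtype.val '' {z | z ∈ q.support})).Connected := by
  have hmap : Subtype.val '' {z | z ∈ q.support}
      = {a | a ∈ (q.map W.hom).support} := by
    ext a
    simp only [Set.mem_image, Set.mem_setOf_eq, Walk.support_map, List.mem_map]
    constructor
    · rintro ⟨z, hz, rfl⟩; exact ⟨z, hz, rfl⟩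
    · rintro ⟨z, hz, rfl⟩; exact ⟨z, hz, rfl⟩
  rw [hmap]
  exact (q.map W.hom).connected_induce_support

lemma ES_conn {u v : ↥(wallVerts r)} (h : (Wall r).Adj u v) :
    (G.induce (D.ES u v)).Connected := by
  rw [D.ES_eq h]
  exact walk_image_conn _

lemma mem_ES_cases {u v u' v' : ↥(wallVerts r)} (h : (Wall r).Adj u v)
    (h' : (Wall r).Adj u' v') (hne : s(u, v) ≠ s(u', v')) {a : α}
    (ha : a ∈ D.ES u v) (ha' : a ∈ D.ES u' v') :
    a = (D.b u : α) ∨ a = (D.b v : α) := by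
  rw [D.ES_eq h] at ha
  rw [D.ES_eq h'] at ha'
  obtain ⟨z, hz, rfl⟩ := ha
  obtain ⟨z', hz', hzz⟩ := ha'
  have : z' = z := Subtype.val_injective hzz
  subst this
  rcases D.pdisj u v h u' v' h' hne z' hz hz' with h1 | h1
  · exact Or.inl (by rw [h1])
  · exact Or.inr (by rw [h1])

lemma b_mem_ES {u v x : ↥(wallVerts r)} (h : (Wall r).Adj u v)
    (hx : (D.b x : α) ∈ D.ES u v) : x = u ∨ x = v := by
  rw [D.ES_eq h] at hx
  obtain ⟨z, hz, hzz⟩ := hx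
  have : z = D.b x := Subtype.val_injective hzz
  subst this
  exact D.branch u v h x hz

/-- `ES` minus the image of the second branch vertex. -/
noncomputable def ESD (u v : ↥(wallVerts r)) : Set α := D.ES u v \ {(D.b v : α)}

lemma ESD_subset (u v : ↥(wallVerts r)) : D.ESD u v ⊆ D.ES u v := Set.diff_subset

lemma bne {u v : ↥(wallVerts r)} (h : (Wall r).Adj u v) : (D.b u : α) ≠ (D.b v : α) :=
  fun hc => wall_ne h (D.inj (Subtype.val_injective hc))

lemma mem_ESD_left {u v : ↥(wallVerts r)} (h : (Wall r).Adj u v) :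
    (D.b u : α) ∈ D.ESD u v :=
  ⟨D.mem_ES_left h, by simpa using D.bne h⟩

lemma ESD_eq_tail {u v : ↥(wallVerts r)} (h : (Wall r).Adj u v) :
    D.ESD u v = Subtype.val ''
      {z | z ∈ ((D.p v u h.symm).tail).support} := by
  have hnn : ¬(D.p v u h.symm).Nil :=
    Walk.not_nil_of_ne (fun hc => (D.bne h).symm (congrArg Subtype.val hc))
  have htail : ((D.p v u h.symm).tail).support = (D.p v u h.symm).support.tail :=
    Walk.support_tail_of_not_nil _ hnn
  have hsupp : (D.p v u h.symm).support
      = (D.b v) :: (D.p v u h.symm).support.tail := Walk.support_eq_cons _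
  have hnodup := (D.ispath v u h.symm).support_nodup
  rw [hsupp] at hnodup
  have hbv : (D.b v) ∉ (D.p v u h.symm).support.tail := (List.nodup_cons.mp hnodup).1
  have hset : {z : ↥W.verts | z ∈ (D.p u v h).support}
      = {z | z ∈ (D.p v u h.symm).support} := by
    ext z
    rw [D.psymm u v h]
    simp [Walk.support_reverse]
  rw [ESD, D.ES_eq h, hset]
  ext a
  simp only [Set.mem_diff, Set.mem_image, Set.mem_setOf_eq, Set.mem_singleton_iff, htail]
  constructor
  · rintro ⟨⟨z, hz, rfl⟩, hne⟩
    refine ⟨z, ?_, rfl⟩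
    rw [hsupp] at hz
    rcases List.mem_cons.mp hz with h1 | h1
    · exact absurd (congrArg Subtype.val h1) hne
    · exact h1
  · rintro ⟨z, hz, rfl⟩
    refine ⟨⟨z, ?_, rfl⟩, ?_⟩
    · rw [hsupp]; exact List.mem_cons_of_mem _ hz
    · intro hc
      have : z = D.b v := Subtype.val_injective hc
      subst this
      exact hbv hz

lemma ESD_conn {u v : ↥(wallVerts r)} (h : (Wall r).Adj u v) :
    (G.induce (D.ESD u v)).Connected := by
  rw [D.ESD_eq_tail h]
  exact walk_image_conn _

lemma ESD_touch {u v : ↥(wallVerts r)} (h : (Wall r).Adj u v) :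
    ∃ a ∈ D.ESD u v, G.Adj (D.b v : α) a := by
  have hnn : ¬(D.p v u h.symm).Nil :=
    Walk.not_nil_of_ne (fun hc => (D.bne h).symm (congrArg Subtype.val hc))
  refine ⟨((D.p v u h.symm).getVert 1 : ↥W.verts), ?_, ?_⟩
  · rw [D.ESD_eq_tail h]
    exact ⟨_, (Walk.start_mem_support _), rfl⟩
  · have := (D.p v u h.symm).adj_snd hnn
    exact this.adj_sub

/-- `A` is covered by expansion paths of edges with endpoints in `S`
(up to removed far endpoints), with edges in `E`. -/
def Fits (A : Set α) (S : Set (ℕ × ℕ)) (E : Set (Sym2 (ℕ × ℕ))) : Prop :=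
  ∀ a ∈ A, ∃ u v : ↥(wallVerts r), (Wall r).Adj u v ∧ a ∈ D.ES u v ∧
    (u : ℕ × ℕ) ∈ S ∧ ((v : ℕ × ℕ) ∈ S ∨ a ≠ (D.b v : α)) ∧ s((u : ℕ × ℕ), (v : ℕ × ℕ)) ∈ E

lemma fits_disjoint {A₁ A₂ : Set α} {S₁ S₂ : Set (ℕ × ℕ)} {E₁ E₂ : Set (Sym2 (ℕ × ℕ))}
    (h1 : D.Fits A₁ S₁ E₁) (h2 : D.Fits A₂ S₂ E₂)
    (hS : ∀ x, x ∈ S₁ → x ∈ S₂ → False)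
    (hE : ∀ e, (∃ x y : ℕ × ℕ, x ≠ y ∧ e = s(x, y)) → e ∈ E₁ → e ∈ E₂ → False) :
    ∀ a, a ∈ A₁ → a ∈ A₂ → False := by
  intro a ha1 ha2
  obtain ⟨u, v, h, haES, huS, hvS, heE⟩ := h1 a ha1
  obtain ⟨u', v', h', haES', huS', hvS', heE'⟩ := h2 a ha2
  have hval_ne : (u : ℕ × ℕ) ≠ (v : ℕ × ℕ) :=
    fun hc => wall_ne h (Subtype.val_injective hc)
  by_cases hee : s((u : ℕ × ℕ), (v : ℕ × ℕ)) = s((u' : ℕ × ℕ), (v' : ℕ × ℕ))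
  · exact hE _ ⟨u, v, hval_ne, rfl⟩ heE (hee ▸ heE')
  · have hsym : s(u, v) ≠ s(u', v') := by
      intro hc
      apply hee
      rcases Sym2.eq_iff.mp hc with ⟨rfl, rfl⟩ | ⟨rfl, rfl⟩
      · rfl
      · exact Sym2.eq_swap
    rcases D.mem_ES_cases h h' hsym haES haES' with rfl | rfl
    · -- a = b u
      rcases D.b_mem_ES h' haES' with rfl | rfl
      · exact hS _ huS huS'
      · rcases hvS' with hv' | hv'
        · exact hS _ huS hv'
        · exact hv' rfl
    · -- a = b v
      have hvS₁ : (v : ℕ × ℕ) ∈ S₁ := by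
        rcases hvS with hv | hv
        · exact hv
        · exact absurd rfl hv
      rcases D.b_mem_ES h' haES' with rfl | rfl
      · exact hS _ hvS₁ huS'
      · rcases hvS' with hv' | hv'
        · exact hS _ hvS₁ hv'
        · exact hv' rfl

end SubdivData

end Expand

section WallConstr

variable {α : Type} {G : SimpleGraph α} {W : G.Subgraph}

/-- clamped wall vertex constructor. -/
def wv (t i j : ℕ) : ↥(wallVerts (2*t+2)) :=
  ⟨(max 1 (min i (2*t+2)), max 1 (min j (2*t+2))), by
    refine ⟨?_, ?_, ?_, ?_⟩ <;> simp <;> omega⟩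

lemma wv_val {t i j : ℕ} (hi1 : 1 ≤ i) (hi2 : i ≤ 2*t+2) (hj1 : 1 ≤ j) (hj2 : j ≤ 2*t+2) :
    ((wv t i j : ↥(wallVerts (2*t+2))) : ℕ × ℕ) = (i, j) := by
  simp only [wv]
  congr 1 <;> omega

lemma wall_adj_of_rel {t : ℕ} {u v : ↥(wallVerts (2*t+2))}
    (hne : (u : ℕ × ℕ) ≠ (v : ℕ × ℕ)) (h : wallRel (2*t+2) u v) :
    (Wall (2*t+2)).Adj u v :=
  ⟨fun hc => hne hc, Or.inl h⟩

lemma wall_adj_h {t i j : ℕ} (hi1 : 1 ≤ i) (hi2 : i + 1 ≤ 2*t+2) (hj1 : 1 ≤ j)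
    (hj2 : j ≤ 2*t+2) : (Wall (2*t+2)).Adj (wv t i j) (wv t (i+1) j) := by
  apply wall_adj_of_rel
  · rw [wv_val hi1 (by omega) hj1 hj2, wv_val (by omega) hi2 hj1 hj2]
    intro hc
    have := congrArg Prod.fst hc
    simp at this
  · unfold wallRel
    rw [wv_val hi1 (by omega) hj1 hj2, wv_val (by omega) hi2 hj1 hj2]
    refine ⟨hi1, by omega, hj1, hj2, by omega, hi2, hj1, hj2, Or.inl ⟨rfl, rfl⟩⟩

lemma wall_adj_v {t i j : ℕ} (hi1 : 1 ≤ i) (hi2 : i ≤ 2*t+2) (hj1 : 1 ≤ j)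
    (hj2 : j + 1 ≤ 2*t+2) (hev : (i + j) % 2 = 0) :
    (Wall (2*t+2)).Adj (wv t i j) (wv t i (j+1)) := by
  apply wall_adj_of_rel
  · rw [wv_val hi1 hi2 hj1 (by omega), wv_val hi1 hi2 (by omega) hj2]
    intro hc
    have := congrArg Prod.snd hc
    simp at this
  · unfold wallRel
    rw [wv_val hi1 hi2 hj1 (by omega), wv_val hi1 hi2 (by omega) hj2]
    exact ⟨hi1, hi2, hj1, by omega, hi1, hi2, by omega, hj2,
      Or.inr ⟨rfl, rfl, Nat.even_iff.mpr hev⟩⟩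

/-- row index used for the vertical edge between columns `j` and `j+1` in double row `m`. -/
def vi (m j : ℕ) : ℕ := if j % 2 = 1 then 2*m-1 else 2*m

lemma vi_cases (m j : ℕ) : vi m j = 2*m-1 ∨ vi m j = 2*m := by
  unfold vi; split <;> simp

lemma vi_parity {m j : ℕ} (hm : 1 ≤ m) : (vi m j + j) % 2 = 0 := by
  unfold vi; split <;> omega

namespace SubdivData

variable {t : ℕ} (D : SubdivData G W (2*t+2))

variable (t) in
/-- expanded `j`-th column restricted to rows `1..2t`. -/
noncomputable def Phat (j : ℕ) : Set α :=
  ⋃ i ∈ Finset.Icc 1 (2*t-1), D.ES (wv t i j) (wv t (i+1) j)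

variable (t) in
noncomputable def PPel (j : ℕ) : Set α :=
  D.Phat t j ∪ D.ESD (wv t (2*t) j) (wv t (2*t+1) j)

variable (t) in
noncomputable def Bhat : Set α :=
  ⋃ i ∈ Finset.Icc 1 (2*t-1), D.ES (wv t i (2*t+2)) (wv t (i+1) (2*t+2))

variable (t) in
/-- one "segment" (rung plus following vertical edge) of a double row. -/
noncomputable def rseg (m j cmax : ℕ) : Set α :=
  D.ES (wv t (2*m-1) j) (wv t (2*m) j) ∪
    (if j < cmax then D.ES (wv t (vi m j) j) (wv t (vi m j) (j+1)) else ∅)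

variable (t) in
noncomputable def Rhat (m : ℕ) : Set α :=
  ⋃ j ∈ Finset.Icc 1 (2*t+1), D.rseg t m j (2*t+1)

variable (t) in
noncomputable def RRel (m : ℕ) : Set α :=
  D.Rhat t m ∪ D.ESD (wv t (2*m-1) (2*t+1)) (wv t (2*m-1) (2*t+2))

variable (t) in
noncomputable def CCel (m j : ℕ) : Set α := D.RRel t m ∪ D.PPel t j

variable (t) in
noncomputable def Ahat : Set α :=
  (⋃ j ∈ Finset.Icc 1 (2*t+2), D.rseg t (t+1) j (2*t+2)) ∪
    D.ESD (wv t (2*t+1) (2*t+2)) (wv t (2*t) (2*t+2))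

end SubdivData

/-- connectivity of a chain of glued connected sets. -/
lemma chain_conn {f : ℕ → Set α} {a n : ℕ} (han : a ≤ n)
    (hc : ∀ k, a ≤ k → k ≤ n → (G.induce (f k)).Connected)
    (hg : ∀ k, a ≤ k → k + 1 ≤ n → (f k ∩ f (k+1)).Nonempty) :
    (G.induce (⋃ k ∈ Finset.Icc a n, f k)).Connected := by
  induction n, han using Nat.le_induction with
  | base =>
    have : ⋃ k ∈ Finset.Icc a a, f k = f a := by
      rw [Finset.Icc_self]; simp
    rw [this]
    exact hc a le_rfl le_rfl
  | succ n han ih =>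
    have hins : (Finset.Icc a (n+1)) = insert (n+1) (Finset.Icc a n) := by
      ext k; simp only [Finset.mem_Icc, Finset.mem_insert]; omega
    have hun : ⋃ k ∈ Finset.Icc a (n+1), f k
        = (⋃ k ∈ Finset.Icc a n, f k) ∪ f (n+1) := by
      rw [hins, Finset.set_biUnion_insert, Set.union_comm]
    rw [hun]
    apply SimpleGraph.induce_union_connected
    · exact (ih (fun k h1 h2 => hc k h1 (by omega)) (fun k h1 h2 => hg k h1 (by omega))).preconnected
    · exact (hc (n+1) (by omega) le_rfl).preconnected
    · obtain ⟨x, hx1, hx2⟩ := hg n (by omega) le_rfl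
      exact ⟨x, Set.mem_biUnion (Finset.mem_Icc.mpr (by omega)) hx1, hx2⟩

end WallConstr

section Conn

variable {α : Type} {G : SimpleGraph α} {W : G.Subgraph}

lemma wall_adj_h' {t i i' j : ℕ} (hi1 : 1 ≤ i) (hii' : i' = i + 1) (hi2 : i' ≤ 2*t+2)
    (hj1 : 1 ≤ j) (hj2 : j ≤ 2*t+2) : (Wall (2*t+2)).Adj (wv t i j) (wv t i' j) := by
  subst hii'; exact wall_adj_h hi1 hi2 hj1 hj2

lemma wall_adj_v' {t i j j' : ℕ} (hi1 : 1 ≤ i) (hi2 : i ≤ 2*t+2) (hj1 : 1 ≤ j)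
    (hjj' : j' = j + 1) (hj2 : j' ≤ 2*t+2) (hev : (i + j) % 2 = 0) :
    (Wall (2*t+2)).Adj (wv t i j) (wv t i j') := by
  subst hjj'; exact wall_adj_v hi1 hi2 hj1 hj2 hev

namespace SubdivData

variable {t : ℕ} (D : SubdivData G W (2*t+2))

lemma conn_Phat (ht : 1 ≤ t) {j : ℕ} (hj1 : 1 ≤ j) (hj2 : j ≤ 2*t+2) :
    (G.induce (D.Phat t j)).Connected := by
  apply chain_conn (by omega : 1 ≤ 2*t-1)
  · intro k hk1 hk2
    exact D.ES_conn (wall_adj_h' (by omega) rfl (by omega) hj1 hj2)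
  · intro k hk1 hk2
    exact ⟨(D.b (wv t (k+1) j) : α),
      D.mem_ES_right (wall_adj_h' (by omega) rfl (by omega) hj1 hj2),
      D.mem_ES_left (wall_adj_h' (by omega) rfl (by omega) hj1 hj2)⟩

lemma mem_Phat_b (ht : 1 ≤ t) {i j : ℕ} (hi1 : 1 ≤ i) (hi2 : i ≤ 2*t) (hj1 : 1 ≤ j)
    (hj2 : j ≤ 2*t+2) : (D.b (wv t i j) : α) ∈ D.Phat t j := by
  by_cases hc : i ≤ 2*t-1
  · exact Set.mem_biUnion (Finset.mem_Icc.mpr (by omega))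
      (D.mem_ES_left (wall_adj_h' (by omega) rfl (by omega) hj1 hj2))
  · have hieq : i = (2*t-1) + 1 := by omega
    rw [hieq]
    exact Set.mem_biUnion (Finset.mem_Icc.mpr (by omega))
      (D.mem_ES_right (wall_adj_h' (by omega) rfl (by omega) hj1 hj2))

lemma conn_PPel (ht : 1 ≤ t) {j : ℕ} (hj1 : 1 ≤ j) (hj2 : j ≤ 2*t+2) :
    (G.induce (D.PPel t j)).Connected := by
  apply SimpleGraph.induce_union_connected (D.conn_Phat ht hj1 hj2).preconnected
    (D.ESD_conn (wall_adj_h' (by omega) rfl (by omega) hj1 hj2)).preconnected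
  exact ⟨(D.b (wv t (2*t) j) : α), D.mem_Phat_b ht (by omega) (by omega) hj1 hj2,
    D.mem_ESD_left (wall_adj_h' (by omega) rfl (by omega) hj1 hj2)⟩

lemma conn_Bhat (ht : 1 ≤ t) : (G.induce (D.Bhat t)).Connected := by
  apply chain_conn (by omega : 1 ≤ 2*t-1)
  · intro k hk1 hk2
    exact D.ES_conn (wall_adj_h' (by omega) rfl (by omega) (by omega) (by omega))
  · intro k hk1 hk2
    exact ⟨(D.b (wv t (k+1) (2*t+2)) : α),
      D.mem_ES_right (wall_adj_h' (by omega) rfl (by omega) (by omega) (by omega)),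
      D.mem_ES_left (wall_adj_h' (by omega) rfl (by omega) (by omega) (by omega))⟩

lemma mem_Bhat_b (ht : 1 ≤ t) {i : ℕ} (hi1 : 1 ≤ i) (hi2 : i ≤ 2*t) :
    (D.b (wv t i (2*t+2)) : α) ∈ D.Bhat t := by
  by_cases hc : i ≤ 2*t-1
  · exact Set.mem_biUnion (Finset.mem_Icc.mpr (by omega))
      (D.mem_ES_left (wall_adj_h' (by omega) rfl (by omega) (by omega) (by omega)))
  · have hieq : i = (2*t-1) + 1 := by omega
    rw [hieq]
    exact Set.mem_biUnion (Finset.mem_Icc.mpr (by omega))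
      (D.mem_ES_right (wall_adj_h' (by omega) rfl (by omega) (by omega) (by omega)))

lemma rung_adj {m j : ℕ} (hm1 : 1 ≤ m) (hm2 : 2*m ≤ 2*t+2) (hj1 : 1 ≤ j) (hj2 : j ≤ 2*t+2) :
    (Wall (2*t+2)).Adj (wv t (2*m-1) j) (wv t (2*m) j) :=
  wall_adj_h' (by omega) (by omega) (by omega) hj1 hj2

lemma vert_adj {m j : ℕ} (hm1 : 1 ≤ m) (hm2 : 2*m ≤ 2*t+2) (hj1 : 1 ≤ j) (hj2 : j+1 ≤ 2*t+2) :
    (Wall (2*t+2)).Adj (wv t (vi m j) j) (wv t (vi m j) (j+1)) := by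
  rcases vi_cases m j with hv | hv <;>
    exact wall_adj_v' (by omega) (by rw [hv]; omega) hj1 rfl hj2 (vi_parity hm1)

lemma mem_rseg_rung_left {m j cmax : ℕ} (hm1 : 1 ≤ m) (hm2 : 2*m ≤ 2*t+2) (hj1 : 1 ≤ j)
    (hj2 : j ≤ 2*t+2) : (D.b (wv t (2*m-1) j) : α) ∈ D.rseg t m j cmax :=
  Or.inl (D.mem_ES_left (rung_adj hm1 hm2 hj1 hj2))

lemma mem_rseg_rung_left' {i m j cmax : ℕ} (hi : i = 2*m-1) (hm1 : 1 ≤ m) (hm2 : 2*m ≤ 2*t+2)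
    (hj1 : 1 ≤ j) (hj2 : j ≤ 2*t+2) : (D.b (wv t i j) : α) ∈ D.rseg t m j cmax := by
  subst hi; exact D.mem_rseg_rung_left hm1 hm2 hj1 hj2

lemma conn_rseg {m j cmax : ℕ} (hm1 : 1 ≤ m) (hm2 : 2*m ≤ 2*t+2) (hj1 : 1 ≤ j)
    (hcmax : cmax ≤ 2*t+2) (hj2 : j ≤ 2*t+2) :
    (G.induce (D.rseg t m j cmax)).Connected := by
  unfold rseg
  by_cases hc : j < cmax
  · rw [if_pos hc]
    apply SimpleGraph.induce_union_connected (D.ES_conn (rung_adj hm1 hm2 hj1 hj2)).preconnected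
      (D.ES_conn (vert_adj hm1 hm2 hj1 (by omega))).preconnected
    refine ⟨(D.b (wv t (vi m j) j) : α), ?_, D.mem_ES_left (vert_adj hm1 hm2 hj1 (by omega))⟩
    rcases vi_cases m j with hv | hv
    · rw [hv]; exact D.mem_ES_left (rung_adj hm1 hm2 hj1 hj2)
    · rw [hv]; exact D.mem_ES_right (rung_adj hm1 hm2 hj1 hj2)
  · rw [if_neg hc, Set.union_empty]
    exact D.ES_conn (rung_adj hm1 hm2 hj1 hj2)

lemma conn_Rhat {m : ℕ} (hm1 : 1 ≤ m) (hm2 : 2*m ≤ 2*t+2) :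
    (G.induce (D.Rhat t m)).Connected := by
  apply chain_conn (by omega : 1 ≤ 2*t+1)
  · intro k hk1 hk2
    exact D.conn_rseg hm1 hm2 (by omega) (by omega) (by omega)
  · intro k hk1 hk2
    refine ⟨(D.b (wv t (vi m k) (k+1)) : α), ?_, ?_⟩
    · refine Or.inr ?_
      rw [if_pos (by omega)]
      exact D.mem_ES_right (vert_adj hm1 hm2 (by omega) (by omega))
    · rcases vi_cases m k with hv | hv
      · rw [hv]
        have : vi m (k+1) = 2*m ∨ True := Or.inr trivial
        exact Or.inl (D.mem_ES_left (rung_adj hm1 hm2 (by omega) (by omega)))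
      · rw [hv]
        exact Or.inl (D.mem_ES_right (rung_adj hm1 hm2 (by omega) (by omega)))

lemma bridgeR_adj {m : ℕ} (hm1 : 1 ≤ m) (hm2 : m ≤ t) :
    (Wall (2*t+2)).Adj (wv t (2*m-1) (2*t+1)) (wv t (2*m-1) (2*t+2)) :=
  wall_adj_v' (by omega) (by omega) (by omega) rfl (by omega) (by omega)

lemma conn_RRel {m : ℕ} (hm1 : 1 ≤ m) (hm2 : m ≤ t) :
    (G.induce (D.RRel t m)).Connected := by
  apply SimpleGraph.induce_union_connected (D.conn_Rhat hm1 (by omega)).preconnected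
    (D.ESD_conn (bridgeR_adj hm1 hm2)).preconnected
  refine ⟨(D.b (wv t (2*m-1) (2*t+1)) : α), ?_, D.mem_ESD_left (bridgeR_adj hm1 hm2)⟩
  exact Set.mem_biUnion (Finset.mem_Icc.mpr (by omega))
    (D.mem_rseg_rung_left hm1 (by omega) (by omega) (by omega))

lemma conn_CCel (ht : 1 ≤ t) {m j : ℕ} (hm1 : 1 ≤ m) (hm2 : m ≤ t) (hj1 : 1 ≤ j)
    (hj2 : j ≤ 2*t+1) : (G.induce (D.CCel t m j)).Connected := by
  apply SimpleGraph.induce_union_connected (D.conn_RRel hm1 hm2).preconnected (D.conn_PPel ht hj1 (by omega)).preconnected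
  refine ⟨(D.b (wv t (2*m-1) j) : α), ?_, ?_⟩
  · exact Or.inl (Set.mem_biUnion (Finset.mem_Icc.mpr (by omega))
      (D.mem_rseg_rung_left hm1 (by omega) hj1 (by omega)))
  · exact Or.inl (D.mem_Phat_b ht (by omega) (by omega) hj1 (by omega))

lemma bridgeA_adj (ht : 1 ≤ t) :
    (Wall (2*t+2)).Adj (wv t (2*t+1) (2*t+2)) (wv t (2*t) (2*t+2)) :=
  (wall_adj_h' (by omega) (by omega : 2*t+1 = 2*t+1) (by omega) (by omega) (by omega)).symm

lemma conn_Ahat (ht : 1 ≤ t) : (G.induce (D.Ahat t)).Connected := by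
  have hchain : (G.induce (⋃ j ∈ Finset.Icc 1 (2*t+2), D.rseg t (t+1) j (2*t+2))).Connected := by
    apply chain_conn (by omega : 1 ≤ 2*t+2)
    · intro k hk1 hk2
      exact D.conn_rseg (by omega) (by omega) (by omega) (by omega) (by omega)
    · intro k hk1 hk2
      refine ⟨(D.b (wv t (vi (t+1) k) (k+1)) : α), ?_, ?_⟩
      · refine Or.inr ?_
        rw [if_pos (by omega)]
        exact D.mem_ES_right (vert_adj (by omega) (by omega) (by omega) (by omega))
      · rcases vi_cases (t+1) k with hv | hv
        · rw [hv]
          exact Or.inl (D.mem_ES_left (rung_adj (by omega) (by omega) (by omega) (by omega)))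
        · rw [hv]
          exact Or.inl (D.mem_ES_right (rung_adj (by omega) (by omega) (by omega) (by omega)))
  apply SimpleGraph.induce_union_connected hchain.preconnected (D.ESD_conn (bridgeA_adj ht)).preconnected
  refine ⟨(D.b (wv t (2*t+1) (2*t+2)) : α), ?_, D.mem_ESD_left (bridgeA_adj ht)⟩
  exact Set.mem_biUnion (Finset.mem_Icc.mpr (by omega))
    (D.mem_rseg_rung_left' (by omega) (by omega) (by omega) (by omega) (by omega))

lemma mem_Ahat_rung (ht : 1 ≤ t) {j : ℕ} (hj1 : 1 ≤ j) (hj2 : j ≤ 2*t+2) :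
    (D.b (wv t (2*t+1) j) : α) ∈ D.Ahat t := by
  exact Or.inl (Set.mem_biUnion (Finset.mem_Icc.mpr (by omega))
    (D.mem_rseg_rung_left' (by omega) (by omega) (by omega) hj1 hj2))

end SubdivData

end Conn

section FitsSec

variable {α : Type} {G : SimpleGraph α} {W : G.Subgraph}

def SP (t j : ℕ) : Set (ℕ×ℕ) := {x | x.2 = j ∧ 1 ≤ x.1 ∧ x.1 ≤ 2*t}
def EP (t j : ℕ) : Set (Sym2 (ℕ×ℕ)) := {e | ∀ x ∈ e, x.2 = j ∧ x.1 ≤ 2*t+1}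
def SB (t : ℕ) : Set (ℕ×ℕ) := {x | x.2 = 2*t+2 ∧ x.1 ≤ 2*t}
def EB (t : ℕ) : Set (Sym2 (ℕ×ℕ)) := {e | ∀ x ∈ e, x.2 = 2*t+2 ∧ x.1 ≤ 2*t}
def SR (t m : ℕ) : Set (ℕ×ℕ) := {x | (x.1 = 2*m-1 ∨ x.1 = 2*m) ∧ x.2 ≤ 2*t+1}
def ER (t m : ℕ) : Set (Sym2 (ℕ×ℕ)) :=
  {e | (∀ x ∈ e, x.1 = 2*m-1 ∨ x.1 = 2*m) ∧ (∃ x ∈ e, x.2 ≤ 2*t+1)}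
def SA (t : ℕ) : Set (ℕ×ℕ) := {x | x.1 = 2*t+1 ∨ x.1 = 2*t+2}
def EA (t : ℕ) : Set (Sym2 (ℕ×ℕ)) :=
  {e | ∃ x y : ℕ×ℕ, e = s(x,y) ∧ (x.1 = 2*t+1 ∨ x.1 = 2*t+2) ∧
    ((y.1 = 2*t+1 ∨ y.1 = 2*t+2) ∨ y = (2*t, 2*t+2))}

namespace SubdivData

variable {t : ℕ} (D : SubdivData G W (2*t+2))

lemma fits_PP (ht : 1 ≤ t) {j : ℕ} (hj1 : 1 ≤ j) (hj2 : j ≤ 2*t+1) :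
    D.Fits (D.PPel t j) (SP t j) (EP t j) := by
  intro a ha
  rcases ha with ha | ha
  · obtain ⟨i, hi, haES⟩ := Set.mem_iUnion₂.mp ha
    rw [Finset.mem_Icc] at hi
    refine ⟨wv t i j, wv t (i+1) j,
      wall_adj_h' (by omega) rfl (by omega) (by omega) (by omega), haES, ?_, ?_, ?_⟩
    · rw [wv_val (by omega) (by omega) (by omega) (by omega)]
      exact ⟨rfl, by omega, by omega⟩
    · refine Or.inl ?_
      rw [wv_val (by omega) (by omega) (by omega) (by omega)]
      exact ⟨rfl, by omega, by omega⟩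
    · rw [wv_val (by omega) (by omega) (by omega) (by omega),
        wv_val (by omega) (by omega) (by omega) (by omega)]
      intro x hx
      rcases Sym2.mem_iff.mp hx with rfl | rfl <;> exact ⟨rfl, by omega⟩
  · refine ⟨wv t (2*t) j, wv t (2*t+1) j,
      wall_adj_h' (by omega) rfl (by omega) (by omega) (by omega), D.ESD_subset _ _ ha, ?_, ?_, ?_⟩
    · rw [wv_val (by omega) (by omega) (by omega) (by omega)]
      exact ⟨rfl, by omega, by omega⟩
    · exact Or.inr (fun hc => ha.2 (by simp [hc]))
    · rw [wv_val (by omega) (by omega) (by omega) (by omega),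
        wv_val (by omega) (by omega) (by omega) (by omega)]
      intro x hx
      rcases Sym2.mem_iff.mp hx with rfl | rfl <;> exact ⟨rfl, by omega⟩

lemma fits_B (ht : 1 ≤ t) : D.Fits (D.Bhat t) (SB t) (EB t) := by
  intro a ha
  obtain ⟨i, hi, haES⟩ := Set.mem_iUnion₂.mp ha
  rw [Finset.mem_Icc] at hi
  refine ⟨wv t i (2*t+2), wv t (i+1) (2*t+2),
    wall_adj_h' (by omega) rfl (by omega) (by omega) (by omega), haES, ?_, ?_, ?_⟩
  · rw [wv_val (by omega) (by omega) (by omega) (by omega)]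
    exact ⟨rfl, by omega⟩
  · refine Or.inl ?_
    rw [wv_val (by omega) (by omega) (by omega) (by omega)]
    exact ⟨rfl, by omega⟩
  · rw [wv_val (by omega) (by omega) (by omega) (by omega),
      wv_val (by omega) (by omega) (by omega) (by omega)]
    intro x hx
    rcases Sym2.mem_iff.mp hx with rfl | rfl <;> exact ⟨rfl, by omega⟩

lemma fits_RR {m : ℕ} (hm1 : 1 ≤ m) (hm2 : m ≤ t) :
    D.Fits (D.RRel t m) (SR t m) (ER t m) := by
  intro a ha
  rcases ha with ha | ha
  · obtain ⟨j, hj, haseg⟩ := Set.mem_iUnion₂.mp ha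
    rw [Finset.mem_Icc] at hj
    rcases haseg with haES | haES
    · -- rung
      refine ⟨wv t (2*m-1) j, wv t (2*m) j, rung_adj hm1 (by omega) (by omega) (by omega),
        haES, ?_, ?_, ?_⟩
      · rw [wv_val (by omega) (by omega) (by omega) (by omega)]
        exact ⟨Or.inl rfl, by omega⟩
      · refine Or.inl ?_
        rw [wv_val (by omega) (by omega) (by omega) (by omega)]
        exact ⟨Or.inr rfl, by omega⟩
      · rw [wv_val (by omega) (by omega) (by omega) (by omega),
          wv_val (by omega) (by omega) (by omega) (by omega)]
        constructor
        · intro x hx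
          rcases Sym2.mem_iff.mp hx with rfl | rfl
          · exact Or.inl rfl
          · exact Or.inr rfl
        · exact ⟨(2*m-1, j), Sym2.mem_iff.mpr (Or.inl rfl), by omega⟩
    · -- vertical edge
      by_cases hc : j < 2*t+1
      · rw [if_pos hc] at haES
        have hvi1 : 1 ≤ vi m j := by rcases vi_cases m j with hv | hv <;> omega
        have hvi2 : vi m j ≤ 2*t+2 := by rcases vi_cases m j with hv | hv <;> omega
        refine ⟨wv t (vi m j) j, wv t (vi m j) (j+1),
          vert_adj hm1 (by omega) (by omega) (by omega), haES, ?_, ?_, ?_⟩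
        · rw [wv_val hvi1 hvi2 (by omega) (by omega)]
          refine ⟨?_, by omega⟩
          rcases vi_cases m j with hv | hv
          · exact Or.inl hv
          · exact Or.inr hv
        · refine Or.inl ?_
          rw [wv_val hvi1 hvi2 (by omega) (by omega)]
          refine ⟨?_, by omega⟩
          rcases vi_cases m j with hv | hv
          · exact Or.inl hv
          · exact Or.inr hv
        · rw [wv_val hvi1 hvi2 (by omega) (by omega),
            wv_val hvi1 hvi2 (by omega) (by omega)]
          constructor
          · intro x hx
            rcases Sym2.mem_iff.mp hx with rfl | rfl <;>
              · rcases vi_cases m j with hv | hv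
                · exact Or.inl hv
                · exact Or.inr hv
          · exact ⟨(vi m j, j), Sym2.mem_iff.mpr (Or.inl rfl), by omega⟩
      · rw [if_neg hc] at haES
        exact absurd haES (Set.notMem_empty a)
  · -- bridge toward B
    refine ⟨wv t (2*m-1) (2*t+1), wv t (2*m-1) (2*t+2), bridgeR_adj hm1 hm2,
      D.ESD_subset _ _ ha, ?_, ?_, ?_⟩
    · rw [wv_val (by omega) (by omega) (by omega) (by omega)]
      exact ⟨Or.inl rfl, by omega⟩
    · exact Or.inr (fun hc => ha.2 (by simp [hc]))
    · rw [wv_val (by omega) (by omega) (by omega) (by omega),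
        wv_val (by omega) (by omega) (by omega) (by omega)]
      constructor
      · intro x hx
        rcases Sym2.mem_iff.mp hx with rfl | rfl <;> exact Or.inl rfl
      · exact ⟨(2*m-1, 2*t+1), Sym2.mem_iff.mpr (Or.inl rfl), by omega⟩

lemma fits_A (ht : 1 ≤ t) : D.Fits (D.Ahat t) (SA t) (EA t) := by
  intro a ha
  rcases ha with ha | ha
  · obtain ⟨j, hj, haseg⟩ := Set.mem_iUnion₂.mp ha
    rw [Finset.mem_Icc] at hj
    rcases haseg with haES | haES
    · refine ⟨wv t (2*(t+1)-1) j, wv t (2*(t+1)) j,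
        rung_adj (by omega) (by omega) (by omega) (by omega), haES, ?_, ?_, ?_⟩
      · rw [wv_val (by omega) (by omega) (by omega) (by omega)]
        exact Or.inl (by omega)
      · refine Or.inl ?_
        rw [wv_val (by omega) (by omega) (by omega) (by omega)]
        exact Or.inr (by omega)
      · rw [wv_val (by omega) (by omega) (by omega) (by omega),
          wv_val (by omega) (by omega) (by omega) (by omega)]
        exact ⟨(2*(t+1)-1, j), (2*(t+1), j), rfl, Or.inl (by omega), Or.inl (Or.inr (by omega))⟩
    · by_cases hc : j < 2*t+2
      · rw [if_pos hc] at haES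
        have hvic : vi (t+1) j = 2*t+1 ∨ vi (t+1) j = 2*t+2 := by
          rcases vi_cases (t+1) j with hv | hv
          · exact Or.inl (by omega)
          · exact Or.inr (by omega)
        have hvi1 : 1 ≤ vi (t+1) j := by omega
        have hvi2 : vi (t+1) j ≤ 2*t+2 := by omega
        refine ⟨wv t (vi (t+1) j) j, wv t (vi (t+1) j) (j+1),
          vert_adj (by omega) (by omega) (by omega) (by omega), haES, ?_, ?_, ?_⟩
        · rw [wv_val hvi1 hvi2 (by omega) (by omega)]
          exact hvic
        · refine Or.inl ?_
          rw [wv_val hvi1 hvi2 (by omega) (by omega)]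
          exact hvic
        · rw [wv_val hvi1 hvi2 (by omega) (by omega),
            wv_val hvi1 hvi2 (by omega) (by omega)]
          exact ⟨(vi (t+1) j, j), (vi (t+1) j, j+1), rfl, hvic, Or.inl hvic⟩
      · rw [if_neg hc] at haES
        exact absurd haES (Set.notMem_empty a)
  · -- bridge toward B
    refine ⟨wv t (2*t+1) (2*t+2), wv t (2*t) (2*t+2), bridgeA_adj ht,
      D.ESD_subset _ _ ha, ?_, ?_, ?_⟩
    · rw [wv_val (by omega) (by omega) (by omega) (by omega)]
      exact Or.inl rfl
    · exact Or.inr (fun hc => ha.2 (by simp [hc]))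
    · rw [wv_val (by omega) (by omega) (by omega) (by omega),
        wv_val (by omega) (by omega) (by omega) (by omega)]
      exact ⟨(2*t+1, 2*t+2), (2*t, 2*t+2), rfl, Or.inl rfl, Or.inr rfl⟩

end SubdivData

end FitsSec

section DisjSec

variable {α : Type} {G : SimpleGraph α} {W : G.Subgraph}

namespace SubdivData

variable {t : ℕ} (D : SubdivData G W (2*t+2))

lemma mem_own {x y : ℕ×ℕ} : x ∈ s(x,y) := Sym2.mem_iff.mpr (Or.inl rfl)
lemma mem_own' {x y : ℕ×ℕ} : y ∈ s(x,y) := Sym2.mem_iff.mpr (Or.inr rfl)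

lemma disj_RR_RR {m m' : ℕ} (hm1 : 1 ≤ m) (hm2 : m ≤ t) (hm1' : 1 ≤ m') (hm2' : m' ≤ t)
    (hne : m ≠ m') : ∀ a, a ∈ D.RRel t m → a ∈ D.RRel t m' → False :=
  D.fits_disjoint (D.fits_RR hm1 hm2) (D.fits_RR hm1' hm2')
    (by
      rintro ⟨x1, x2⟩ h1 h2
      simp only [SR, Set.mem_setOf_eq] at h1 h2
      omega)
    (by
      rintro e ⟨xw, yw, hwne, rfl⟩ ⟨hall, _⟩ ⟨hall', _⟩
      have h1 := hall xw mem_own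
      have h2 := hall' xw mem_own
      omega)

lemma disj_PP_PP (ht : 1 ≤ t) {j j' : ℕ} (hj1 : 1 ≤ j) (hj2 : j ≤ 2*t+1) (hj1' : 1 ≤ j')
    (hj2' : j' ≤ 2*t+1) (hne : j ≠ j') :
    ∀ a, a ∈ D.PPel t j → a ∈ D.PPel t j' → False :=
  D.fits_disjoint (D.fits_PP ht hj1 hj2) (D.fits_PP ht hj1' hj2')
    (by
      rintro ⟨x1, x2⟩ h1 h2
      simp only [SP, Set.mem_setOf_eq] at h1 h2
      omega)
    (by
      rintro e ⟨xw, yw, hwne, rfl⟩ hall hall'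
      have h1 := hall xw mem_own
      have h2 := hall' xw mem_own
      omega)

lemma disj_A_RR (ht : 1 ≤ t) {m : ℕ} (hm1 : 1 ≤ m) (hm2 : m ≤ t) :
    ∀ a, a ∈ D.Ahat t → a ∈ D.RRel t m → False :=
  D.fits_disjoint (D.fits_A ht) (D.fits_RR hm1 hm2)
    (by
      rintro ⟨x1, x2⟩ h1 h2
      simp only [SA, SR, Set.mem_setOf_eq] at h1 h2
      omega)
    (by
      rintro e ⟨xw, yw, hwne, rfl⟩ ⟨x, y, he, hx, _⟩ ⟨hall, _⟩
      have hxe : x ∈ s(xw, yw) := by rw [he]; exact mem_own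
      have h1 := hall x hxe
      omega)

lemma disj_A_PP (ht : 1 ≤ t) {j : ℕ} (hj1 : 1 ≤ j) (hj2 : j ≤ 2*t+1) :
    ∀ a, a ∈ D.Ahat t → a ∈ D.PPel t j → False :=
  D.fits_disjoint (D.fits_A ht) (D.fits_PP ht hj1 hj2)
    (by
      rintro ⟨x1, x2⟩ h1 h2
      simp only [SA, SP, Set.mem_setOf_eq] at h1 h2
      omega)
    (by
      rintro e ⟨xw, yw, hwne, rfl⟩ ⟨x, y, he, hx, hy⟩ hallP
      have hxe : x ∈ s(xw, yw) := by rw [he]; exact mem_own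
      have hye : y ∈ s(xw, yw) := by rw [he]; exact mem_own'
      have hPx := hallP x hxe
      have hPy := hallP y hye
      rcases hy with hy | hy
      · have hxy : x = y := Prod.ext_iff.mpr ⟨by omega, by omega⟩
        subst hxy
        rcases Sym2.eq_iff.mp he with ⟨rfl, rfl⟩ | ⟨rfl, rfl⟩ <;> exact hwne rfl
      · have : y.2 = 2*t+2 := by rw [hy]
        omega)

lemma disj_A_B (ht : 1 ≤ t) : ∀ a, a ∈ D.Ahat t → a ∈ D.Bhat t → False :=
  D.fits_disjoint (D.fits_A ht) (D.fits_B ht)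
    (by
      rintro ⟨x1, x2⟩ h1 h2
      simp only [SA, SB, Set.mem_setOf_eq] at h1 h2
      omega)
    (by
      rintro e ⟨xw, yw, hwne, rfl⟩ ⟨x, y, he, hx, _⟩ hallB
      have hxe : x ∈ s(xw, yw) := by rw [he]; exact mem_own
      have h1 := hallB x hxe
      omega)

lemma disj_B_RR (ht : 1 ≤ t) {m : ℕ} (hm1 : 1 ≤ m) (hm2 : m ≤ t) :
    ∀ a, a ∈ D.Bhat t → a ∈ D.RRel t m → False :=
  D.fits_disjoint (D.fits_B ht) (D.fits_RR hm1 hm2)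
    (by
      rintro ⟨x1, x2⟩ h1 h2
      simp only [SB, SR, Set.mem_setOf_eq] at h1 h2
      omega)
    (by
      rintro e ⟨xw, yw, hwne, rfl⟩ hallB ⟨_, x, hxe, hcol⟩
      have h1 := hallB x hxe
      omega)

lemma disj_B_PP (ht : 1 ≤ t) {j : ℕ} (hj1 : 1 ≤ j) (hj2 : j ≤ 2*t+1) :
    ∀ a, a ∈ D.Bhat t → a ∈ D.PPel t j → False :=
  D.fits_disjoint (D.fits_B ht) (D.fits_PP ht hj1 hj2)
    (by
      rintro ⟨x1, x2⟩ h1 h2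
      simp only [SB, SP, Set.mem_setOf_eq] at h1 h2
      omega)
    (by
      rintro e ⟨xw, yw, hwne, rfl⟩ hallB hallP
      have h1 := hallB xw mem_own
      have h2 := hallP xw mem_own
      omega)

lemma disj_A_CC (ht : 1 ≤ t) {m j : ℕ} (hm1 : 1 ≤ m) (hm2 : m ≤ t) (hj1 : 1 ≤ j)
    (hj2 : j ≤ 2*t+1) : ∀ a, a ∈ D.Ahat t → a ∈ D.CCel t m j → False := by
  intro a ha hc
  rcases hc with hc | hc
  · exact D.disj_A_RR ht hm1 hm2 a ha hc
  · exact D.disj_A_PP ht hj1 hj2 a ha hc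

lemma disj_B_CC (ht : 1 ≤ t) {m j : ℕ} (hm1 : 1 ≤ m) (hm2 : m ≤ t) (hj1 : 1 ≤ j)
    (hj2 : j ≤ 2*t+1) : ∀ a, a ∈ D.Bhat t → a ∈ D.CCel t m j → False := by
  intro a ha hc
  rcases hc with hc | hc
  · exact D.disj_B_RR ht hm1 hm2 a ha hc
  · exact D.disj_B_PP ht hj1 hj2 a ha hc

end SubdivData

end DisjSec

section TouchSec

variable {α : Type} {G : SimpleGraph α} {W : G.Subgraph}

namespace SubdivData

variable {t : ℕ} (D : SubdivData G W (2*t+2))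

lemma mem_RRel_rung {m j : ℕ} (hm1 : 1 ≤ m) (hm2 : m ≤ t) (hj1 : 1 ≤ j) (hj2 : j ≤ 2*t+1) :
    (D.b (wv t (2*m-1) j) : α) ∈ D.RRel t m :=
  Or.inl (Set.mem_biUnion (Finset.mem_Icc.mpr (by omega))
    (D.mem_rseg_rung_left hm1 (by omega) hj1 (by omega)))

lemma mem_PPel_b (ht : 1 ≤ t) {i j : ℕ} (hi1 : 1 ≤ i) (hi2 : i ≤ 2*t) (hj1 : 1 ≤ j)
    (hj2 : j ≤ 2*t+2) : (D.b (wv t i j) : α) ∈ D.PPel t j :=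
  Or.inl (D.mem_Phat_b ht hi1 hi2 hj1 hj2)

lemma touch_CC_CC (ht : 1 ≤ t) {m j m' j' : ℕ} (hm1 : 1 ≤ m) (hm2 : m ≤ t) (hj1 : 1 ≤ j)
    (hj2 : j ≤ 2*t+1) (hm1' : 1 ≤ m') (hm2' : m' ≤ t) :
    (D.CCel t m j ∩ D.CCel t m' j').Nonempty :=
  ⟨(D.b (wv t (2*m'-1) j) : α),
    Or.inr (D.mem_PPel_b ht (by omega) (by omega) hj1 (by omega)),
    Or.inl (D.mem_RRel_rung hm1' hm2' hj1 hj2)⟩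

lemma touch_A_CC (ht : 1 ≤ t) {m j : ℕ} (hj1 : 1 ≤ j) (hj2 : j ≤ 2*t+1) :
    ∃ x ∈ D.Ahat t, ∃ y ∈ D.CCel t m j, G.Adj x y := by
  obtain ⟨a, haESD, hadj⟩ :=
    D.ESD_touch (wall_adj_h' (by omega) rfl (by omega) hj1 (by omega)
      : (Wall (2*t+2)).Adj (wv t (2*t) j) (wv t (2*t+1) j))
  exact ⟨(D.b (wv t (2*t+1) j) : α), D.mem_Ahat_rung ht hj1 (by omega),
    a, Or.inr (Or.inr haESD), hadj⟩

lemma touch_B_CC (ht : 1 ≤ t) {m j : ℕ} (hm1 : 1 ≤ m) (hm2 : m ≤ t) :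
    ∃ x ∈ D.Bhat t, ∃ y ∈ D.CCel t m j, G.Adj x y := by
  obtain ⟨a, haESD, hadj⟩ := D.ESD_touch (bridgeR_adj hm1 hm2)
  exact ⟨(D.b (wv t (2*m-1) (2*t+2)) : α), D.mem_Bhat_b ht (by omega) (by omega),
    a, Or.inl (Or.inr haESD), hadj⟩

lemma touch_A_B (ht : 1 ≤ t) :
    ∃ x ∈ D.Ahat t, ∃ y ∈ D.Bhat t, G.Adj x y := by
  obtain ⟨a, haESD, hadj⟩ := D.ESD_touch (bridgeA_adj ht)
  exact ⟨a, Or.inr haESD, (D.b (wv t (2*t) (2*t+2)) : α),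
    D.mem_Bhat_b ht (by omega) (by omega), hadj.symm⟩

lemma nonempty_Ahat (ht : 1 ≤ t) : (D.Ahat t).Nonempty :=
  ⟨_, D.mem_Ahat_rung ht (by omega : (1:ℕ) ≤ 1) (by omega)⟩

lemma nonempty_Bhat (ht : 1 ≤ t) : (D.Bhat t).Nonempty :=
  ⟨_, D.mem_Bhat_b ht (by omega : (1:ℕ) ≤ 1) (by omega)⟩

end SubdivData

end TouchSec

lemma card_filter_le_of_disj {α : Type} [DecidableEq α] (X : Finset α) (R : ℕ → Set α)
    (s : Finset ℕ) [DecidablePred fun m => ∃ x ∈ X, x ∈ R m]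
    (hdisj : ∀ m ∈ s, ∀ m' ∈ s, m ≠ m' → ∀ a, a ∈ R m → a ∈ R m' → False) :
    ((s.filter (fun m => ∃ x ∈ X, x ∈ R m)).card ≤ X.card) := by
  classical
  set g : α → ℕ := fun x => if h : ∃ m ∈ s, x ∈ R m then h.choose else 0 with hg
  have hsub : s.filter (fun m => ∃ x ∈ X, x ∈ R m) ⊆ X.image g := by
    intro m hm
    rw [Finset.mem_filter] at hm
    obtain ⟨x, hxX, hxR⟩ := hm.2
    have hex : ∃ m' ∈ s, x ∈ R m' := ⟨m, hm.1, hxR⟩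
    have hgx : g x = m := by
      rw [hg]
      simp only [dif_pos hex]
      obtain ⟨hms', hxR'⟩ := hex.choose_spec
      by_contra hne
      exact hdisj _ hms' _ hm.1 hne x hxR' hxR
    exact Finset.mem_image.mpr ⟨x, hxX, hgx⟩
  calc (s.filter (fun m => ∃ x ∈ X, x ∈ R m)).card ≤ (X.image g).card :=
        Finset.card_le_card hsub
    _ ≤ X.card := Finset.card_image_le

end Stmt16Aux



open Stmt16Aux in
/-- Every graph containing a subdivision of the `(2t+2)`-wall as a subgraph has
treewidth at least `t+1`. -/
theorem stmt16 (t : ℕ) {α : Type} (G : SimpleGraph α)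
    (h : containsSubdivision G (Wall (2 * t + 2))) :
    ¬ twLE G t := by
  classical
  intro htw
  obtain ⟨Wsub, b, p, hinj, hpath, hsymm, hbranch, hdisj, -, -⟩ := h
  obtain ⟨ι, T, bag, hT, hedge, hconn, hcard⟩ := htw
  set D : SubdivData G Wsub (2*t+2) := ⟨b, p, hinj, hpath, hsymm, hbranch, hdisj⟩ with hDdef
  rcases Nat.eq_zero_or_pos t with rfl | ht
  · -- t = 0 : G has an edge, but bags have size ≤ 1
    have hadj : (Wall (2*0+2)).Adj (wv 0 1 1) (wv 0 2 1) :=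
      wall_adj_h' (by omega) rfl (by omega) (by omega) (by omega)
    have hnn : ¬ (D.p _ _ hadj).Nil :=
      SimpleGraph.Walk.not_nil_of_ne (D.inj.ne (wall_ne hadj))
    have hGadj : G.Adj ((D.b (wv 0 1 1) : ↥Wsub.verts) : α)
        (((D.p _ _ hadj).getVert 1 : ↥Wsub.verts) : α) :=
      ((D.p _ _ hadj).adj_snd hnn).adj_sub
    obtain ⟨i, hi1, hi2⟩ := hedge _ _ hGadj
    have h2 : 1 < (bag i).card := Finset.one_lt_card.mpr ⟨_, hi1, _, hi2, hGadj.ne⟩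
    have := hcard i
    omega
  · -- main case t ≥ 1
    set L : List (Set α) :=
      D.Ahat t :: D.Bhat t ::
        ((Finset.Icc 1 t ×ˢ Finset.Icc 1 (2*t+1)).toList.map fun q => D.CCel t q.1 q.2) with hL
    have hmemL : ∀ E ∈ L, E = D.Ahat t ∨ E = D.Bhat t ∨
        ∃ m j, 1 ≤ m ∧ m ≤ t ∧ 1 ≤ j ∧ j ≤ 2*t+1 ∧ E = D.CCel t m j := by
      intro E hE
      rw [hL] at hE
      rcases List.mem_cons.mp hE with rfl | hE
      · exact Or.inl rfl
      rcases List.mem_cons.mp hE with rfl | hE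
      · exact Or.inr (Or.inl rfl)
      obtain ⟨q, hq, rfl⟩ := List.mem_map.mp hE
      obtain ⟨hq1, hq2⟩ := Finset.mem_product.mp (Finset.mem_toList.mp hq)
      rw [Finset.mem_Icc] at hq1 hq2
      exact Or.inr (Or.inr ⟨q.1, q.2, hq1.1, hq1.2, hq2.1, hq2.2, rfl⟩)
    have hCCL : ∀ m j, 1 ≤ m → m ≤ t → 1 ≤ j → j ≤ 2*t+1 → D.CCel t m j ∈ L := by
      intro m j h1 h2 h3 h4
      rw [hL]
      refine List.mem_cons_of_mem _ (List.mem_cons_of_mem _ ?_)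
      refine List.mem_map.mpr ⟨(m, j), ?_, rfl⟩
      rw [Finset.mem_toList, Finset.mem_product, Finset.mem_Icc, Finset.mem_Icc]
      exact ⟨⟨h1, h2⟩, ⟨h3, h4⟩⟩
    have hLconn : ∀ E ∈ L, (G.induce E).Connected := by
      intro E hE
      rcases hmemL E hE with rfl | rfl | ⟨m, j, h1, h2, h3, h4, rfl⟩
      · exact D.conn_Ahat ht
      · exact D.conn_Bhat ht
      · exact D.conn_CCel ht h1 h2 h3 h4
    have htouch : ∀ E ∈ L, ∀ F ∈ L, (E ∩ F).Nonempty ∨ ∃ x ∈ E, ∃ y ∈ F, G.Adj x y := by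
      intro E hE F hF
      rcases hmemL E hE with rfl | rfl | ⟨m, j, h1, h2, h3, h4, rfl⟩ <;>
        rcases hmemL F hF with rfl | rfl | ⟨m', j', h1', h2', h3', h4', rfl⟩
      · exact Or.inl ⟨_, D.mem_Ahat_rung (j := 1) ht (by omega) (by omega),
          D.mem_Ahat_rung (j := 1) ht (by omega) (by omega)⟩
      · exact Or.inr (D.touch_A_B ht)
      · exact Or.inr (D.touch_A_CC ht h3' h4')
      · obtain ⟨x, hx, y, hy, hxy⟩ := D.touch_A_B ht
        exact Or.inr ⟨y, hy, x, hx, hxy.symm⟩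
      · exact Or.inl ⟨_, D.mem_Bhat_b (i := 1) ht (by omega) (by omega),
          D.mem_Bhat_b (i := 1) ht (by omega) (by omega)⟩
      · exact Or.inr (D.touch_B_CC ht h1' h2')
      · obtain ⟨x, hx, y, hy, hxy⟩ := D.touch_A_CC ht h3 h4
        exact Or.inr ⟨y, hy, x, hx, hxy.symm⟩
      · obtain ⟨x, hx, y, hy, hxy⟩ := D.touch_B_CC ht h1 h2
        exact Or.inr ⟨y, hy, x, hx, hxy.symm⟩
      · exact Or.inl (D.touch_CC_CC ht h1 h2 h3 h4 h1' h2')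
    obtain ⟨i₀, hit⟩ := bramble_bag hT hedge hconn L hLconn htouch
      (by rw [hL]; exact List.cons_ne_nil _ _)
    obtain ⟨aA, haA, haX⟩ := hit _ (by rw [hL]; exact List.mem_cons_self)
    obtain ⟨aB, hbB, hbX⟩ := hit _
      (by rw [hL]; exact List.mem_cons_of_mem _ (List.mem_cons_self))
    have hab : aA ≠ aB := fun hc => D.disj_A_B ht aA haA (hc ▸ hbB)
    set X' : Finset α := ((bag i₀).erase aA).erase aB with hX'
    have hBe : aB ∈ (bag i₀).erase aA := Finset.mem_erase.mpr ⟨fun hc => hab hc.symm, hbX⟩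
    have hX'card : X'.card ≤ t - 1 := by
      rw [hX', Finset.card_erase_of_mem hBe, Finset.card_erase_of_mem haX]
      have := hcard i₀
      omega
    have hM := card_filter_le_of_disj X' (D.RRel t) (Finset.Icc 1 t)
      (by
        intro m hm m' hm' hne a ha ha'
        rw [Finset.mem_Icc] at hm hm'
        exact D.disj_RR_RR hm.1 hm.2 hm'.1 hm'.2 hne a ha ha')
    obtain ⟨m₀, hm₀Icc, hm₀⟩ : ∃ m₀ ∈ Finset.Icc 1 t, ¬ ∃ x ∈ X', x ∈ D.RRel t m₀ := by
      by_contra hcon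
      push_neg at hcon
      have hsub : Finset.Icc 1 t ⊆
          (Finset.Icc 1 t).filter (fun m => ∃ x ∈ X', x ∈ D.RRel t m) := by
        intro m hm
        exact Finset.mem_filter.mpr ⟨hm, hcon m hm⟩
      have hle := Finset.card_le_card hsub
      rw [Nat.card_Icc] at hle
      omega
    have hJ := card_filter_le_of_disj X' (D.PPel t) (Finset.Icc 1 (2*t+1))
      (by
        intro j hj j' hj' hne a ha ha'
        rw [Finset.mem_Icc] at hj hj'
        exact D.disj_PP_PP ht hj.1 hj.2 hj'.1 hj'.2 hne a ha ha')
    obtain ⟨j₀, hj₀Icc, hj₀⟩ : ∃ j₀ ∈ Finset.Icc 1 (2*t+1), ¬ ∃ x ∈ X', x ∈ D.PPel t j₀ := by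
      by_contra hcon
      push_neg at hcon
      have hsub : Finset.Icc 1 (2*t+1) ⊆
          (Finset.Icc 1 (2*t+1)).filter (fun j => ∃ x ∈ X', x ∈ D.PPel t j) := by
        intro j hj
        exact Finset.mem_filter.mpr ⟨hj, hcon j hj⟩
      have hle := Finset.card_le_card hsub
      rw [Nat.card_Icc] at hle
      omega
    rw [Finset.mem_Icc] at hm₀Icc hj₀Icc
    obtain ⟨x, hxCC, hxX⟩ := hit _ (hCCL m₀ j₀ hm₀Icc.1 hm₀Icc.2 hj₀Icc.1 hj₀Icc.2)
    by_cases hxa : x = aA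
    · exact D.disj_A_CC ht hm₀Icc.1 hm₀Icc.2 hj₀Icc.1 hj₀Icc.2 x (hxa ▸ haA) hxCC
    by_cases hxb : x = aB
    · exact D.disj_B_CC ht hm₀Icc.1 hm₀Icc.2 hj₀Icc.1 hj₀Icc.2 x (hxb ▸ hbB) hxCC
    have hxX' : x ∈ X' := by
      rw [hX']
      exact Finset.mem_erase.mpr ⟨hxb, Finset.mem_erase.mpr ⟨hxa, hxX⟩⟩
    rcases hxCC with hx | hx
    · exact hm₀ ⟨x, hxX', hx⟩
    · exact hj₀ ⟨x, hxX', hx⟩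
end

section
/- For every integer w ≥ 0 there exists a CNF formula F and a variable x ∈ var(F) such that {x} is a strong W_{≤1}-backdoor set of F and tw(inc(F)) ≥ w. -/
open SimpleGraph

section TreeLemmas
variable {ι : Type} {T : SimpleGraph ι}

lemma uniq_path (hT : T.IsAcyclic) {a b : ι} (p q : T.Walk a b) (hp : p.IsPath) (hq : q.IsPath) :
    p = q := by
  have := isAcyclic_iff_path_unique.mp hT (⟨p, hp⟩ : T.Path a b) ⟨q, hq⟩
  exact congrArg Subtype.val this

lemma medAux :
    ∀ {a b : ι} (p : T.Walk a b), p.IsPath →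
    ∀ {c : ι} (q : T.Walk b c), q.IsPath →
    ∃ (m : ι) (w : T.Walk a c), w.IsPath ∧ m ∈ p.support ∧ m ∈ q.support ∧ m ∈ w.support ∧
      (∀ v ∈ w.support, v ∈ p.support ∨ v ∈ q.support) := by
  classical
  intro a b p
  induction p with
  | nil =>
    intro _ c q hq
    exact ⟨_, q, hq, by simp, q.start_mem_support, q.start_mem_support, fun v hv => Or.inr hv⟩
  | @cons a a₂ b h p' ih =>
    intro hp c q hq
    rw [SimpleGraph.Walk.cons_isPath_iff] at hp
    by_cases ha : a ∈ q.support
    · refine ⟨a, q.dropUntil a ha, hq.dropUntil ha, Walk.start_mem_support _, ha,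
        Walk.start_mem_support _, fun v hv => Or.inr (Walk.support_dropUntil_subset _ _ hv)⟩
    · obtain ⟨m, w', hw', hmp, hmq, hmw, hsub⟩ := ih hp.1 q hq
      have haw : a ∉ w'.support := by
        intro hin
        rcases hsub a hin with h1 | h2
        · exact hp.2 h1
        · exact ha h2
      refine ⟨m, Walk.cons h w', Walk.IsPath.cons hw' haw, ?_, hmq, ?_, ?_⟩
      · rw [Walk.support_cons]; exact List.mem_cons_of_mem _ hmp
      · rw [Walk.support_cons]; exact List.mem_cons_of_mem _ hmw
      · intro v hv
        rw [Walk.support_cons] at hv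
        rcases List.mem_cons.mp hv with rfl | hv'
        · exact Or.inl (Walk.start_mem_support _)
        · rcases hsub v hv' with h1 | h2
          · exact Or.inl (by rw [Walk.support_cons]; exact List.mem_cons_of_mem _ h1)
          · exact Or.inr h2

def PC (T : SimpleGraph ι) (S : Set ι) : Prop :=
  ∀ a ∈ S, ∀ b ∈ S, ∃ w : T.Walk a b, ∀ v ∈ w.support, v ∈ S

lemma PC.inter (hT : T.IsAcyclic) {A B : Set ι} (hA : PC T A) (hB : PC T B) :
    PC T (A ∩ B) := by
  classical
  intro a ha b hb
  obtain ⟨wa, hwa⟩ := hA a ha.1 b hb.1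
  obtain ⟨wb, hwb⟩ := hB a ha.2 b hb.2
  refine ⟨wa.bypass, fun v hv => ⟨hwa _ (wa.support_bypass_subset hv), ?_⟩⟩
  have he : wa.bypass = wb.bypass := uniq_path hT _ _ (Walk.bypass_isPath _) (Walk.bypass_isPath _)
  exact hwb _ (wb.support_bypass_subset (he ▸ hv))

lemma helly3 (hT : T.IsAcyclic) {A B C : Set ι} (hA : PC T A) (hB : PC T B) (hC : PC T C)
    (hab : (A ∩ B).Nonempty) (hbc : (B ∩ C).Nonempty) (hac : (A ∩ C).Nonempty) :
    (A ∩ B ∩ C).Nonempty := by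
  classical
  obtain ⟨a, ha⟩ := hab
  obtain ⟨b, hb⟩ := hbc
  obtain ⟨c, hc⟩ := hac
  obtain ⟨haA, haB⟩ := ha
  obtain ⟨hbB, hbC⟩ := hb
  obtain ⟨hcA, hcC⟩ := hc
  obtain ⟨wB, hwB⟩ := hB a haB b hbB
  obtain ⟨wC, hwC⟩ := hC b hbC c hcC
  obtain ⟨m, w, hw, hmp, hmq, hmw, _⟩ :=
    medAux wB.bypass (Walk.bypass_isPath _) wC.bypass (Walk.bypass_isPath _)
  obtain ⟨wA, hwA⟩ := hA a haA c hcA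
  have he : w = wA.bypass := uniq_path hT _ _ hw (Walk.bypass_isPath _)
  refine ⟨m, ⟨⟨?_, ?_⟩, ?_⟩⟩
  · exact hwA _ (wA.support_bypass_subset (he ▸ hmw))
  · exact hwB _ (wB.support_bypass_subset hmp)
  · exact hwC _ (wC.support_bypass_subset hmq)

lemma hellyList (hT : T.IsAcyclic) :
    ∀ (N : ℕ) (L : List (Set ι)), L.length = N → L ≠ [] →
    (∀ S ∈ L, PC T S) → (∀ S ∈ L, ∀ S' ∈ L, (S ∩ S').Nonempty) →
    ∃ t, ∀ S ∈ L, t ∈ S := by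
  intro N
  induction N with
  | zero =>
    intro L hL hne _ _
    exact absurd (List.length_eq_zero_iff.mp hL) hne
  | succ N ih =>
    intro L hL hne hPC hpair
    match L with
    | [S₁] =>
      obtain ⟨t, ht, _⟩ := hpair S₁ (by simp) S₁ (by simp)
      exact ⟨t, by simpa using ht⟩
    | S₁ :: S₂ :: L₃ =>
      have h1 : S₁ ∈ S₁ :: S₂ :: L₃ := by simp
      have h2 : S₂ ∈ S₁ :: S₂ :: L₃ := by simp
      obtain ⟨t, ht⟩ := ih ((S₁ ∩ S₂) :: L₃) (by simpa using hL) (by simp)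
        (by
          intro S hS
          rcases List.mem_cons.mp hS with rfl | hS'
          · exact PC.inter hT (hPC S₁ h1) (hPC S₂ h2)
          · exact hPC S (by simp [hS']))
        (by
          intro S hS S' hS'
          rcases List.mem_cons.mp hS with rfl | hS3 <;>
            rcases List.mem_cons.mp hS' with rfl | hS4
          · exact (hpair S₁ h1 S₂ h2).mono (by intro x hx; exact ⟨⟨hx.1, hx.2⟩, hx.1, hx.2⟩)
          · have := helly3 hT (hPC S₁ h1) (hPC S₂ h2) (hPC S' (by simp [hS4]))
              (hpair S₁ h1 S₂ h2) (hpair S₂ h2 S' (by simp [hS4])) (hpair S₁ h1 S' (by simp [hS4]))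
            exact this
          · have := helly3 hT (hPC S₁ h1) (hPC S₂ h2) (hPC S (by simp [hS3]))
              (hpair S₁ h1 S₂ h2) (hpair S₂ h2 S (by simp [hS3])) (hpair S₁ h1 S (by simp [hS3]))
            obtain ⟨x, hx⟩ := this
            exact ⟨x, hx.2, hx.1⟩
          · exact hpair S (by simp [hS3]) S' (by simp [hS4]))
      refine ⟨t, ?_⟩
      intro S hS
      rcases List.mem_cons.mp hS with rfl | hS'
      · exact (ht _ List.mem_cons_self).1
      · rcases List.mem_cons.mp hS' with rfl | hS''
        · exact (ht _ List.mem_cons_self).2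
        · exact ht S (List.mem_cons_of_mem _ hS'')

end TreeLemmas

section Parent
variable {α : Type} [DecidableEq α]

def Desc (par : α → α) (b x : α) : Prop := ∃ k, par^[k] x = b

lemma twLE_of_parent (G : SimpleGraph α) (par : α → α) (r : α) (d : α → ℕ)
    (hr : par r = r) (hd : ∀ a, a ≠ r → d (par a) < d a)
    (hadj : ∀ a b, G.Adj a b → par a = b ∨ par b = a) : twLE G 1 := by
  have hpar_ne : ∀ a, a ≠ r → par a ≠ a := fun a ha h => by
    have := hd a ha; rw [h] at this; exact lt_irrefl _ this
  have hdpar : ∀ a, d (par a) ≤ d a := by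
    intro a
    by_cases h : a = r
    · subst h; rw [hr]
    · exact le_of_lt (hd a h)
  have hiter : ∀ (k : ℕ) (x : α), d (par^[k] x) ≤ d x := by
    intro k
    induction k with
    | zero => intro x; simp
    | succ k ih =>
      intro x
      rw [Function.iterate_succ_apply']
      exact le_trans (hdpar _) (ih x)
  set T : SimpleGraph α := SimpleGraph.fromRel (fun a b => a = par b) with hTdef
  have hTadj : ∀ a b, T.Adj a b ↔ a ≠ b ∧ (a = par b ∨ b = par a) := by
    intro a b; rw [hTdef]; exact SimpleGraph.fromRel_adj _ a b
  -- connectivity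
  have hreach : ∀ a, T.Reachable a r := by
    have key : ∀ (m : ℕ) (a : α), d a ≤ m → T.Reachable a r := by
      intro m
      induction m with
      | zero =>
        intro a hda
        by_cases h : a = r
        · subst h; exact Reachable.refl _
        · exact absurd (lt_of_lt_of_le (hd a h) hda) (Nat.not_lt_zero _)
      | succ m ih =>
        intro a hda
        by_cases h : a = r
        · subst h; exact Reachable.refl _
        · have h1 : T.Adj a (par a) := by
            rw [hTadj]
            exact ⟨fun he => hpar_ne a h he.symm, Or.inr rfl⟩
          exact (h1.reachable).trans (ih (par a) (Nat.lt_succ_iff.mp (lt_of_lt_of_le (hd a h) hda)))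
    exact fun a => key (d a) a le_rfl
  -- acyclicity: every edge is a bridge
  have hacyc : T.IsAcyclic := by
    rw [isAcyclic_iff_forall_adj_isBridge]
    have bridge_case : ∀ w : α, w ≠ r → ¬(T \ fromEdgeSet {s(w, par w)}).Reachable w (par w) := by
      intro w hwr hreach'
      have walkDesc : ∀ {x y : α} (p : (T \ fromEdgeSet {s(w, par w)}).Walk x y),
          Desc par w x → Desc par w y := by
        intro x y p
        induction p with
        | nil => exact id
        | @cons x x₂ y h p ih =>
          intro hx
          apply ih
          have hadj' : T.Adj x x₂ ∧ ¬(fromEdgeSet {s(w, par w)}).Adj x x₂ := by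
            rwa [SimpleGraph.sdiff_adj] at h
          have hne : x ≠ x₂ := hadj'.1.ne
          have hedge : s(x, x₂) ≠ s(w, par w) := by
            intro he
            exact hadj'.2 (by rw [fromEdgeSet_adj]; exact ⟨by simp [he], hne⟩)
          rcases (hTadj x x₂).mp hadj'.1 with ⟨_, hc | hc⟩
          · -- x = par x₂
            obtain ⟨k, hk⟩ := hx
            exact ⟨k + 1, by rw [Function.iterate_succ_apply, ← hc, hk]⟩
          · -- x₂ = par x
            obtain ⟨k, hk⟩ := hx
            by_cases hxw : x = w
            · exfalso
              apply hedge
              rw [hxw, hc, hxw]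
            · cases k with
              | zero => exact absurd hk hxw
              | succ k' =>
                exact ⟨k', by rw [← hk, Function.iterate_succ_apply, ← hc]⟩
      have hdesc : Desc par w (par w) := by
        obtain ⟨p⟩ := hreach'
        exact walkDesc p ⟨0, rfl⟩
      obtain ⟨k, hk⟩ := hdesc
      have : d w ≤ d (par w) := by have h2 := hiter k (par w); rwa [hk] at h2
      exact absurd (lt_of_lt_of_le (hd w hwr) this) (lt_irrefl _)
    intro v w hvw
    rw [isBridge_iff]
    rcases (hTadj v w).mp hvw with ⟨hne, hc | hc⟩
    · -- v = par w
      subst hc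
      have hwr : w ≠ r := by
        intro h; subst h; exact hne hr
      intro hre
      apply bridge_case w hwr
      have hre2 := hre.symm
      rwa [Sym2.eq_swap] at hre2
    · -- w = par v
      subst hc
      have hvr : v ≠ r := by
        intro h; subst h; exact hne hr.symm
      exact bridge_case v hvr
  -- assemble the tree decomposition
  refine ⟨α, T, fun a => {a, par a},
    ⟨(connected_iff _).mpr ⟨fun a b => (hreach a).trans (hreach b).symm, ⟨r⟩⟩, hacyc⟩, ?_, ?_, ?_⟩
  · intro u v huv
    rcases hadj u v huv with h | h
    · exact ⟨u, Finset.mem_insert_self _ _, by rw [← h]; exact Finset.mem_insert_of_mem (Finset.mem_singleton_self _)⟩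
    · exact ⟨v, by rw [← h]; exact Finset.mem_insert_of_mem (Finset.mem_singleton_self _), Finset.mem_insert_self _ _⟩
  · intro v
    have hv : v ∈ ({i | v ∈ ({i, par i} : Finset α)} : Set α) := by
      simp [Finset.mem_insert]
    rw [connected_iff]
    refine ⟨?_, ⟨⟨v, hv⟩⟩⟩

    have base : ∀ x : ({i | v ∈ ({i, par i} : Finset α)} : Set α),
        (T.induce {i | v ∈ ({i, par i} : Finset α)}).Reachable x ⟨v, hv⟩ := by
      rintro ⟨a, ha⟩
      have ha' : v = a ∨ v = par a := by
        simpa [Finset.mem_insert, Finset.mem_singleton] using ha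
      by_cases hav : a = v
      · have : (⟨a, ha⟩ : ({i | v ∈ ({i, par i} : Finset α)} : Set α)) = ⟨v, hv⟩ :=
          Subtype.ext hav
        rw [this]
      · rcases ha' with h1 | h2
        · exact absurd h1.symm hav
        · have hadj2 : (T.induce {i | v ∈ ({i, par i} : Finset α)}).Adj ⟨a, ha⟩ ⟨v, hv⟩ := by
            show T.Adj a v
            rw [hTadj]
            exact ⟨hav, Or.inr h2⟩
          exact hadj2.reachable
    exact fun x y => (base x).trans (base y).symm
  · intro i
    exact le_trans (Finset.card_insert_le _ _) (by simp)

namespace S18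

def P (n i j : ℕ) : ℕ := (n+1)*i + j

lemma Pdiv {n i j : ℕ} (hj : j ≤ n) : P n i j / (n+1) = i := by
  unfold P
  rw [Nat.mul_add_div (Nat.succ_pos n), Nat.div_eq_of_lt (by omega)]
  omega

lemma Pmod {n i j : ℕ} (hj : j ≤ n) : P n i j % (n+1) = j := by
  unfold P
  rw [Nat.mul_add_mod]
  exact Nat.mod_eq_of_lt (by omega)

lemma Ppos {n i j : ℕ} (hj : 1 ≤ j) : P n i j ≠ 0 := by unfold P; omega

def clsN (n : ℕ) : Finset (ℕ × ℕ × Bool) :=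
  (Finset.Icc 1 n ×ˢ Finset.Icc 1 n ×ˢ (Finset.univ : Finset Bool)).filter
    (fun c => if c.2.2 then c.1 + 1 ≤ n else c.2.1 + 1 ≤ n)

lemma mem_clsN {n : ℕ} {c : ℕ × ℕ × Bool} :
    c ∈ clsN n ↔ (1 ≤ c.1 ∧ c.1 ≤ n ∧ 1 ≤ c.2.1 ∧ c.2.1 ≤ n ∧
      (if c.2.2 then c.1 + 1 ≤ n else c.2.1 + 1 ≤ n)) := by
  unfold clsN
  simp only [Finset.mem_filter, Finset.mem_product, Finset.mem_Icc, Finset.mem_univ, and_true]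
  tauto

def litN (n : ℕ) (c : ℕ × ℕ × Bool) : Finset (ℕ × Bool) :=
  if c.2.2 then {(0,false),(P n c.1 c.2.1,true),(P n (c.1+1) c.2.1,true)}
  else {(0,true),(P n c.1 c.2.1,true),(P n c.1 (c.2.1+1),true)}

def Fm (n : ℕ) : CNF ℕ where
  ι := ℕ × ℕ × Bool
  cls := clsN n
  lit := litN n
  ok := by
    intro i hi v hv
    obtain ⟨h1, h2⟩ := hv
    have hj : 1 ≤ i.2.1 := (mem_clsN.mp hi).2.2.1
    unfold litN at h1 h2
    by_cases hb : i.2.2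
    · rw [if_pos hb] at h1 h2
      simp only [Finset.mem_insert, Finset.mem_singleton, Prod.mk.injEq] at h1 h2
      have hv0 : v = 0 := by tauto
      subst hv0
      rcases h1 with ⟨_, h⟩ | ⟨h, _⟩ | ⟨h, _⟩
      · simp at h
      · exact absurd h.symm (Ppos hj)
      · exact absurd h.symm (Ppos hj)
    · rw [if_neg hb] at h2
      simp only [Finset.mem_insert, Finset.mem_singleton, Prod.mk.injEq] at h2
      tauto

lemma lit_Fm (n : ℕ) : (Fm n).lit = litN n := rfl

lemma mem_cls_reduce {n : ℕ} {τ : ℕ → Bool} {c : ℕ × ℕ × Bool} :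
    c ∈ ((Fm n).reduce {0} τ).cls ↔ c ∈ clsN n ∧ τ 0 = c.2.2 := by
  show c ∈ (clsN n).filter (fun i => ∀ l ∈ (Fm n).lit i, l.1 ∈ ({0} : Finset ℕ) → τ l.1 ≠ l.2) ↔ _
  refine Iff.trans (Finset.mem_filter (s := (Fm n).cls) (p := fun i : (Fm n).ι => ∀ l ∈ (Fm n).lit i, l.1 ∈ ({0} : Finset ℕ) → τ l.1 ≠ l.2)) ?_
  constructor
  · rintro ⟨hc, hp⟩
    refine ⟨hc, ?_⟩
    by_cases hb : c.2.2
    · have := hp (0, false) (by rw [lit_Fm]; unfold litN; rw [if_pos hb]; simp) (by simp)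
      simp only [ne_eq] at this
      rw [hb]
      revert this
      cases τ 0 <;> simp
    · have := hp (0, true) (by rw [lit_Fm]; unfold litN; rw [if_neg hb]; simp) (by simp)
      simp only [ne_eq] at this
      rw [Bool.not_eq_true] at hb
      rw [hb]
      revert this
      cases τ 0 <;> simp
  · rintro ⟨hc, hτ⟩
    refine ⟨hc, ?_⟩
    intro l hl hl0
    have hj : 1 ≤ c.2.1 := (mem_clsN.mp hc).2.2.1
    have hl0' : l.1 = 0 := by simpa using hl0
    rw [lit_Fm] at hl
    unfold litN at hl
    by_cases hb : c.2.2
    · rw [if_pos hb] at hl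
      simp only [Finset.mem_insert, Finset.mem_singleton, Prod.ext_iff] at hl
      rcases hl with ⟨_, h2⟩ | ⟨h1, _⟩ | ⟨h1, _⟩
      · rw [hl0', h2, hτ, hb]; simp
      · exact absurd (hl0' ▸ h1.symm) (Ppos hj)
      · exact absurd (hl0' ▸ h1.symm) (Ppos hj)
    · rw [if_neg hb] at hl
      simp only [Finset.mem_insert, Finset.mem_singleton, Prod.ext_iff] at hl
      rw [Bool.not_eq_true] at hb
      rcases hl with ⟨_, h2⟩ | ⟨h1, _⟩ | ⟨h1, _⟩
      · rw [hl0', h2, hτ, hb]; simp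
      · exact absurd (hl0' ▸ h1.symm) (Ppos hj)
      · exact absurd (hl0' ▸ h1.symm) (Ppos (Nat.le_add_right 1 c.2.1 |>.trans (by omega)))

lemma inc_adj_inv {V : Type} (F : CNF V) (a b : V ⊕ F.ι) (h : F.inc.Adj a b) :
    ∃ (x : V) (i : F.ι), (a = Sum.inl x ∧ b = Sum.inr i ∨ a = Sum.inr i ∧ b = Sum.inl x) ∧
      i ∈ F.cls ∧ ((x, true) ∈ F.lit i ∨ (x, false) ∈ F.lit i) := by
  rw [CNF.inc, SimpleGraph.fromRel_adj] at h
  obtain ⟨hne, h | h⟩ := h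
  · cases a with
    | inl x =>
      cases b with
      | inl y => exact absurd h not_false
      | inr i => exact ⟨x, i, Or.inl ⟨rfl, rfl⟩, h⟩
    | inr i =>
      cases b <;> exact absurd h not_false
  · cases b with
    | inl x =>
      cases a with
      | inl y => exact absurd h not_false
      | inr i => exact ⟨x, i, Or.inr ⟨rfl, rfl⟩, h⟩
    | inr i =>
      cases a <;> exact absurd h not_false

/-- parent map, vertical case (τ 0 = true) -/
def parV (n : ℕ) : (ℕ ⊕ (ℕ × ℕ × Bool)) → (ℕ ⊕ (ℕ × ℕ × Bool))
  | Sum.inl m =>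
      if 2 ≤ m / (n+1) ∧ m / (n+1) ≤ n ∧ 1 ≤ m % (n+1) ∧ m % (n+1) ≤ n
      then Sum.inr (m / (n+1) - 1, m % (n+1), true) else Sum.inl 0
  | Sum.inr c =>
      if c.2.2 = true ∧ 1 ≤ c.1 ∧ c.1 + 1 ≤ n ∧ 1 ≤ c.2.1 ∧ c.2.1 ≤ n
      then Sum.inl (P n c.1 c.2.1) else Sum.inl 0

def dV (n : ℕ) : (ℕ ⊕ (ℕ × ℕ × Bool)) → ℕ
  | Sum.inl m =>
      if 1 ≤ m / (n+1) ∧ m / (n+1) ≤ n ∧ 1 ≤ m % (n+1) ∧ m % (n+1) ≤ n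
      then 2 * (m / (n+1)) - 1 else (if m = 0 then 0 else 1)
  | Sum.inr c =>
      if c.2.2 = true ∧ 1 ≤ c.1 ∧ c.1 + 1 ≤ n ∧ 1 ≤ c.2.1 ∧ c.2.1 ≤ n
      then 2 * c.1 else 1

/-- parent map, horizontal case (τ 0 = false) -/
def parH (n : ℕ) : (ℕ ⊕ (ℕ × ℕ × Bool)) → (ℕ ⊕ (ℕ × ℕ × Bool))
  | Sum.inl m =>
      if 1 ≤ m / (n+1) ∧ m / (n+1) ≤ n ∧ 2 ≤ m % (n+1) ∧ m % (n+1) ≤ n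
      then Sum.inr (m / (n+1), m % (n+1) - 1, false) else Sum.inl 0
  | Sum.inr c =>
      if c.2.2 = false ∧ 1 ≤ c.1 ∧ c.1 ≤ n ∧ 1 ≤ c.2.1 ∧ c.2.1 + 1 ≤ n
      then Sum.inl (P n c.1 c.2.1) else Sum.inl 0

def dH (n : ℕ) : (ℕ ⊕ (ℕ × ℕ × Bool)) → ℕ
  | Sum.inl m =>
      if 1 ≤ m / (n+1) ∧ m / (n+1) ≤ n ∧ 1 ≤ m % (n+1) ∧ m % (n+1) ≤ n
      then 2 * (m % (n+1)) - 1 else (if m = 0 then 0 else 1)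
  | Sum.inr c =>
      if c.2.2 = false ∧ 1 ≤ c.1 ∧ c.1 ≤ n ∧ 1 ≤ c.2.1 ∧ c.2.1 + 1 ≤ n
      then 2 * c.2.1 else 1

lemma backdoor (n : ℕ) (τ : ℕ → Bool) : twLE ((Fm n).reduce {0} τ).inc 1 := by
  classical
  have hlit_red : ∀ (c : ℕ × ℕ × Bool) (x : ℕ) (bb : Bool),
      (x, bb) ∈ ((Fm n).reduce {0} τ).lit c → x ≠ 0 ∧ (x, bb) ∈ litN n c := by
    intro c x bb hx
    have h2 : (x, bb) ∈ (litN n c).filter (fun l => l.1 ∉ ({0} : Finset ℕ)) := hx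
    rw [Finset.mem_filter] at h2
    exact ⟨by simpa using h2.2, h2.1⟩
  cases hτ : τ 0 with
  | true =>
    apply twLE_of_parent _ (parV n) (Sum.inl 0) (dV n)
    · simp [parV]
    · intro a ha
      cases a with
      | inl m =>
        have hm : m ≠ 0 := by intro h; exact ha (by rw [h])
        by_cases h2 : 2 ≤ m / (n+1) ∧ m / (n+1) ≤ n ∧ 1 ≤ m % (n+1) ∧ m % (n+1) ≤ n
        · have h1 : 1 ≤ m / (n+1) ∧ m / (n+1) ≤ n ∧ 1 ≤ m % (n+1) ∧ m % (n+1) ≤ n := by omega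
          rw [show parV n (Sum.inl m) = Sum.inr (m / (n+1) - 1, m % (n+1), true) by
            simp only [parV, if_pos h2]]
          rw [show dV n (Sum.inl m) = 2 * (m / (n+1)) - 1 by simp only [dV, if_pos h1]]
          have e1 : 1 ≤ m / (n+1) - 1 := by omega
          have e2 : m / (n+1) - 1 + 1 ≤ n := by omega
          have e3 : 1 ≤ m % (n+1) := by omega
          have e4 : m % (n+1) ≤ n := by omega
          rw [show dV n (Sum.inr (m / (n+1) - 1, m % (n+1), true)) = 2 * (m / (n+1) - 1) by
            simp [dV, e1, e2, e3, e4]]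
          omega
        · rw [show parV n (Sum.inl m) = Sum.inl 0 by simp only [parV, if_neg h2]]
          rw [show dV n (Sum.inl 0) = 0 by simp [dV]]
          by_cases h1 : 1 ≤ m / (n+1) ∧ m / (n+1) ≤ n ∧ 1 ≤ m % (n+1) ∧ m % (n+1) ≤ n
          · rw [show dV n (Sum.inl m) = 2 * (m / (n+1)) - 1 by simp only [dV, if_pos h1]]
            omega
          · rw [show dV n (Sum.inl m) = 1 by simp only [dV, if_neg h1, if_neg hm]]
            omega
      | inr c =>
        by_cases hc : c.2.2 = true ∧ 1 ≤ c.1 ∧ c.1 + 1 ≤ n ∧ 1 ≤ c.2.1 ∧ c.2.1 ≤ n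
        · obtain ⟨hb, hc1, hc2, hc3, hc4⟩ := hc
          have hdiv : P n c.1 c.2.1 / (n+1) = c.1 := Pdiv (by omega)
          have hmod : P n c.1 c.2.1 % (n+1) = c.2.1 := Pmod (by omega)
          have hcnd : c.2.2 = true ∧ 1 ≤ c.1 ∧ c.1 + 1 ≤ n ∧ 1 ≤ c.2.1 ∧ c.2.1 ≤ n :=
            ⟨hb, hc1, hc2, hc3, hc4⟩
          rw [show parV n (Sum.inr c) = Sum.inl (P n c.1 c.2.1) by
            simp only [parV, if_pos hcnd]]
          rw [show dV n (Sum.inr c) = 2 * c.1 by simp only [dV, if_pos hcnd]]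
          have h1 : 1 ≤ P n c.1 c.2.1 / (n+1) ∧ P n c.1 c.2.1 / (n+1) ≤ n ∧
              1 ≤ P n c.1 c.2.1 % (n+1) ∧ P n c.1 c.2.1 % (n+1) ≤ n := by
            rw [hdiv, hmod]; omega
          rw [show dV n (Sum.inl (P n c.1 c.2.1)) = 2 * (P n c.1 c.2.1 / (n+1)) - 1 by
            simp only [dV, if_pos h1]]
          rw [hdiv]
          omega
        · rw [show parV n (Sum.inr c) = Sum.inl 0 by simp only [parV, if_neg hc]]
          rw [show dV n (Sum.inl 0) = 0 by simp [dV]]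
          rw [show dV n (Sum.inr c) = 1 by simp only [dV, if_neg hc]]
          omega
    · intro a b hab
      obtain ⟨x, c, hor, hc, hx⟩ := inc_adj_inv ((Fm n).reduce {0} τ) a b hab
      obtain ⟨ci, cj, cb⟩ := c
      erw [mem_cls_reduce] at hc
      obtain ⟨hcN, hτc⟩ := hc
      have hb2 : cb = true := hτc.symm.trans hτ
      subst hb2
      obtain ⟨hi1, hi2, hj1, hj2, hval⟩ := mem_clsN.mp hcN
      have hi1' : 1 ≤ ci := hi1
      have hi2' : ci ≤ n := hi2
      have hj1' : 1 ≤ cj := hj1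
      have hj2' : cj ≤ n := hj2
      have hval' : ci + 1 ≤ n := by simpa using hval
      have hxP : x = P n ci cj ∨ x = P n (ci + 1) cj := by
        rcases hx with hx | hx
        · obtain ⟨hx0, hxl⟩ := hlit_red (ci, cj, true) x true hx
          unfold litN at hxl
          simp only [Finset.mem_insert, Finset.mem_singleton, Prod.ext_iff, if_pos] at hxl
          rcases hxl with ⟨h, _⟩ | ⟨h, _⟩ | ⟨h, _⟩
          · exact absurd h hx0
          · exact Or.inl h
          · exact Or.inr h
        · obtain ⟨hx0, hxl⟩ := hlit_red (ci, cj, true) x false hx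
          unfold litN at hxl
          simp only [Finset.mem_insert, Finset.mem_singleton, Prod.ext_iff, if_pos] at hxl
          rcases hxl with ⟨h, _⟩ | ⟨_, h⟩ | ⟨_, h⟩
          · exact absurd h hx0
          · simp at h
          · simp at h
      have key : parV n (Sum.inl x) = Sum.inr (ci, cj, true) ∨
          parV n (Sum.inr (ci, cj, true)) = Sum.inl x := by
        rcases hxP with hX | hX
        · right
          have hcnd2 : True ∧ 1 ≤ ci ∧ ci + 1 ≤ n ∧ 1 ≤ cj ∧ cj ≤ n :=
            ⟨trivial, hi1', hval', hj1', hj2'⟩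
          rw [show parV n (Sum.inr (ci, cj, true)) = Sum.inl (P n ci cj) by
            simp only [parV]; rw [if_pos hcnd2]]
          rw [hX]
        · left
          subst hX
          have hdiv : P n (ci + 1) cj / (n+1) = ci + 1 := Pdiv (by omega)
          have hmod : P n (ci + 1) cj % (n+1) = cj := Pmod (by omega)
          have hcnd : 2 ≤ P n (ci + 1) cj / (n+1) ∧ P n (ci + 1) cj / (n+1) ≤ n ∧
              1 ≤ P n (ci + 1) cj % (n+1) ∧ P n (ci + 1) cj % (n+1) ≤ n := by
            rw [hdiv, hmod]
            omega
          rw [show parV n (Sum.inl (P n (ci+1) cj)) =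
              Sum.inr (P n (ci+1) cj / (n+1) - 1, P n (ci+1) cj % (n+1), true) by
            simp only [parV, if_pos hcnd]]
          rw [hdiv, hmod]
          simp only [Nat.add_sub_cancel]
      rcases hor with ⟨ha, hb⟩ | ⟨ha, hb⟩
      · subst ha; subst hb; exact key
      · subst ha; subst hb; exact key.symm
  | false =>
    apply twLE_of_parent _ (parH n) (Sum.inl 0) (dH n)
    · simp [parH]
    · intro a ha
      cases a with
      | inl m =>
        have hm : m ≠ 0 := by intro h; exact ha (by rw [h])
        by_cases h2 : 1 ≤ m / (n+1) ∧ m / (n+1) ≤ n ∧ 2 ≤ m % (n+1) ∧ m % (n+1) ≤ n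
        · have h1 : 1 ≤ m / (n+1) ∧ m / (n+1) ≤ n ∧ 1 ≤ m % (n+1) ∧ m % (n+1) ≤ n := by omega
          rw [show parH n (Sum.inl m) = Sum.inr (m / (n+1), m % (n+1) - 1, false) by
            simp only [parH, if_pos h2]]
          rw [show dH n (Sum.inl m) = 2 * (m % (n+1)) - 1 by simp only [dH, if_pos h1]]
          have e1 : 1 ≤ m / (n+1) := by omega
          have e2 : m / (n+1) ≤ n := by omega
          have e3 : 1 ≤ m % (n+1) - 1 := by omega
          have e4 : (m % (n+1) - 1) + 1 ≤ n := by omega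
          rw [show dH n (Sum.inr (m / (n+1), m % (n+1) - 1, false)) = 2 * (m % (n+1) - 1) by
            simp [dH, e1, e2, e3, e4]]
          omega
        · rw [show parH n (Sum.inl m) = Sum.inl 0 by simp only [parH, if_neg h2]]
          rw [show dH n (Sum.inl 0) = 0 by simp [dH]]
          by_cases h1 : 1 ≤ m / (n+1) ∧ m / (n+1) ≤ n ∧ 1 ≤ m % (n+1) ∧ m % (n+1) ≤ n
          · rw [show dH n (Sum.inl m) = 2 * (m % (n+1)) - 1 by simp only [dH, if_pos h1]]
            omega
          · rw [show dH n (Sum.inl m) = 1 by simp only [dH, if_neg h1, if_neg hm]]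
            omega
      | inr c =>
        by_cases hc : c.2.2 = false ∧ 1 ≤ c.1 ∧ c.1 ≤ n ∧ 1 ≤ c.2.1 ∧ c.2.1 + 1 ≤ n
        · obtain ⟨hb, hc1, hc2, hc3, hc4⟩ := hc
          have hcnd : c.2.2 = false ∧ 1 ≤ c.1 ∧ c.1 ≤ n ∧ 1 ≤ c.2.1 ∧ c.2.1 + 1 ≤ n :=
            ⟨hb, hc1, hc2, hc3, hc4⟩
          have hdiv : P n c.1 c.2.1 / (n+1) = c.1 := Pdiv (by omega)
          have hmod : P n c.1 c.2.1 % (n+1) = c.2.1 := Pmod (by omega)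
          rw [show parH n (Sum.inr c) = Sum.inl (P n c.1 c.2.1) by
            simp only [parH, if_pos hcnd]]
          rw [show dH n (Sum.inr c) = 2 * c.2.1 by simp only [dH, if_pos hcnd]]
          have h1 : 1 ≤ P n c.1 c.2.1 / (n+1) ∧ P n c.1 c.2.1 / (n+1) ≤ n ∧
              1 ≤ P n c.1 c.2.1 % (n+1) ∧ P n c.1 c.2.1 % (n+1) ≤ n := by
            rw [hdiv, hmod]; omega
          rw [show dH n (Sum.inl (P n c.1 c.2.1)) = 2 * (P n c.1 c.2.1 % (n+1)) - 1 by
            simp only [dH, if_pos h1]]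
          rw [hmod]
          omega
        · rw [show parH n (Sum.inr c) = Sum.inl 0 by simp only [parH, if_neg hc]]
          rw [show dH n (Sum.inl 0) = 0 by simp [dH]]
          rw [show dH n (Sum.inr c) = 1 by simp only [dH, if_neg hc]]
          omega
    · intro a b hab
      obtain ⟨x, c, hor, hc, hx⟩ := inc_adj_inv ((Fm n).reduce {0} τ) a b hab
      obtain ⟨ci, cj, cb⟩ := c
      erw [mem_cls_reduce] at hc
      obtain ⟨hcN, hτc⟩ := hc
      have hb2 : cb = false := hτc.symm.trans hτ
      subst hb2
      obtain ⟨hi1, hi2, hj1, hj2, hval⟩ := mem_clsN.mp hcN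
      have hi1' : 1 ≤ ci := hi1
      have hi2' : ci ≤ n := hi2
      have hj1' : 1 ≤ cj := hj1
      have hj2' : cj ≤ n := hj2
      have hval' : cj + 1 ≤ n := by simpa using hval
      have hxP : x = P n ci cj ∨ x = P n ci (cj + 1) := by
        rcases hx with hx | hx
        · obtain ⟨hx0, hxl⟩ := hlit_red (ci, cj, false) x true hx
          have hxl' : (x, true) ∈ ({(0,true),(P n ci cj,true),(P n ci (cj+1),true)} :
              Finset (ℕ × Bool)) := by
            unfold litN at hxl
            rwa [if_neg (by simp)] at hxl
          simp only [Finset.mem_insert, Finset.mem_singleton, Prod.ext_iff] at hxl'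
          rcases hxl' with ⟨h, _⟩ | ⟨h, _⟩ | ⟨h, _⟩
          · exact absurd h hx0
          · exact Or.inl h
          · exact Or.inr h
        · obtain ⟨hx0, hxl⟩ := hlit_red (ci, cj, false) x false hx
          have hxl' : (x, false) ∈ ({(0,true),(P n ci cj,true),(P n ci (cj+1),true)} :
              Finset (ℕ × Bool)) := by
            unfold litN at hxl
            rwa [if_neg (by simp)] at hxl
          simp only [Finset.mem_insert, Finset.mem_singleton, Prod.ext_iff] at hxl'
          rcases hxl' with ⟨_, h⟩ | ⟨_, h⟩ | ⟨_, h⟩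
          · simp at h
          · simp at h
          · simp at h
      have key : parH n (Sum.inl x) = Sum.inr (ci, cj, false) ∨
          parH n (Sum.inr (ci, cj, false)) = Sum.inl x := by
        rcases hxP with hX | hX
        · right
          have hcnd2 : True ∧ 1 ≤ ci ∧ ci ≤ n ∧ 1 ≤ cj ∧ cj + 1 ≤ n :=
            ⟨trivial, hi1', hi2', hj1', hval'⟩
          rw [show parH n (Sum.inr (ci, cj, false)) = Sum.inl (P n ci cj) by
            simp only [parH]; rw [if_pos hcnd2]]
          rw [hX]
        · left
          subst hX
          have hdiv : P n ci (cj + 1) / (n+1) = ci := Pdiv (by omega)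
          have hmod : P n ci (cj + 1) % (n+1) = cj + 1 := Pmod (by omega)
          have hcnd : 1 ≤ P n ci (cj + 1) / (n+1) ∧ P n ci (cj + 1) / (n+1) ≤ n ∧
              2 ≤ P n ci (cj + 1) % (n+1) ∧ P n ci (cj + 1) % (n+1) ≤ n := by
            rw [hdiv, hmod]
            omega
          rw [show parH n (Sum.inl (P n ci (cj+1))) =
              Sum.inr (P n ci (cj+1) / (n+1), P n ci (cj+1) % (n+1) - 1, false) by
            simp only [parH, if_pos hcnd]]
          rw [hdiv, hmod]
          simp only [Nat.add_sub_cancel]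
      rcases hor with ⟨ha, hb⟩ | ⟨ha, hb⟩
      · subst ha; subst hb; exact key
      · subst ha; subst hb; exact key.symm

-- ===== negative side =====

lemma support_append_sub {α : Type} {G : SimpleGraph α} {a b c : α} (p : G.Walk a b)
    (q : G.Walk b c) (v : α) (hv : v ∈ (p.append q).support) :
    v ∈ p.support ∨ v ∈ q.support := by
  rw [Walk.support_append, List.mem_append] at hv
  rcases hv with h | h
  · exact Or.inl h
  · exact Or.inr (List.mem_of_mem_tail h)

lemma adjH {n i j : ℕ} (hi1 : 1 ≤ i) (hi2 : i ≤ n) (hj1 : 1 ≤ j) (hj2 : j + 1 ≤ n) :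
    (Fm n).inc.Adj (Sum.inl (P n i j)) (Sum.inr (i,j,false)) ∧
    (Fm n).inc.Adj (Sum.inl (P n i (j+1))) (Sum.inr (i,j,false)) := by
  have hc : ((i,j,false) : ℕ × ℕ × Bool) ∈ clsN n := by
    rw [mem_clsN]
    refine ⟨hi1, hi2, hj1, (by show j ≤ n; omega), ?_⟩
    rw [if_neg (by simp)]
    show j + 1 ≤ n
    omega
  constructor <;>
  · rw [CNF.inc, SimpleGraph.fromRel_adj]
    refine ⟨by simp, Or.inl ?_⟩
    refine ⟨hc, Or.inl ?_⟩
    show _ ∈ litN n (i,j,false)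
    unfold litN
    rw [if_neg (by simp)]
    simp

lemma adjV {n i j : ℕ} (hi1 : 1 ≤ i) (hi2 : i + 1 ≤ n) (hj1 : 1 ≤ j) (hj2 : j ≤ n) :
    (Fm n).inc.Adj (Sum.inl (P n i j)) (Sum.inr (i,j,true)) ∧
    (Fm n).inc.Adj (Sum.inl (P n (i+1) j)) (Sum.inr (i,j,true)) := by
  have hc : ((i,j,true) : ℕ × ℕ × Bool) ∈ clsN n := by
    rw [mem_clsN]
    refine ⟨hi1, (by show i ≤ n; omega), hj1, hj2, ?_⟩
    rw [if_pos rfl]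
    show i + 1 ≤ n
    omega
  constructor <;>
  · rw [CNF.inc, SimpleGraph.fromRel_adj]
    refine ⟨by simp, Or.inl ?_⟩
    refine ⟨hc, Or.inl ?_⟩
    show _ ∈ litN n (i,j,true)
    unfold litN
    rw [if_pos (by simp)]
    simp

def cross (n i j : ℕ) : Set (ℕ ⊕ (ℕ × ℕ × Bool)) :=
  {a | (∃ l, 1 ≤ l ∧ l ≤ n ∧ a = Sum.inl (P n i l)) ∨
       (∃ l, 1 ≤ l ∧ l + 1 ≤ n ∧ a = Sum.inr (i,l,false)) ∨
       (∃ k, 1 ≤ k ∧ k ≤ n ∧ a = Sum.inl (P n k j)) ∨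
       (∃ k, 1 ≤ k ∧ k + 1 ≤ n ∧ a = Sum.inr (k,j,true))}

lemma rowSeg {n i j : ℕ} (hi1 : 1 ≤ i) (hi2 : i ≤ n) :
    ∀ (dlt l : ℕ), 1 ≤ l → l + dlt ≤ n →
    ∃ w : (Fm n).inc.Walk (Sum.inl (P n i l)) (Sum.inl (P n i (l + dlt))),
      ∀ v ∈ w.support, v ∈ cross n i j := by
  intro dlt
  induction dlt with
  | zero =>
    intro l hl1 hl2
    refine ⟨Walk.nil, ?_⟩
    intro v hv
    simp only [Walk.support_nil, List.mem_singleton] at hv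
    subst hv
    exact Or.inl ⟨l, hl1, by omega, rfl⟩
  | succ dlt ih =>
    intro l hl1 hl2
    obtain ⟨w, hw⟩ := ih l hl1 (by omega)
    have e1 := (adjH hi1 hi2 (show 1 ≤ l + dlt by omega) (show (l + dlt) + 1 ≤ n by omega)).1
    have e2 := (adjH hi1 hi2 (show 1 ≤ l + dlt by omega) (show (l + dlt) + 1 ≤ n by omega)).2
    refine ⟨w.append (Walk.cons e1 (Walk.cons e2.symm Walk.nil)), ?_⟩
    intro v hv
    rcases support_append_sub _ _ v hv with h | h
    · exact hw v h
    · simp only [Walk.support_cons, Walk.support_nil, List.mem_cons,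
        List.mem_singleton, List.not_mem_nil, or_false] at h
      rcases h with rfl | rfl | rfl
      · exact Or.inl ⟨l + dlt, by omega, by omega, rfl⟩
      · exact Or.inr (Or.inl ⟨l + dlt, by omega, by omega, rfl⟩)
      · exact Or.inl ⟨l + dlt + 1, by omega, by omega, rfl⟩

lemma colSeg {n i j : ℕ} (hj1 : 1 ≤ j) (hj2 : j ≤ n) :
    ∀ (dlt k : ℕ), 1 ≤ k → k + dlt ≤ n →
    ∃ w : (Fm n).inc.Walk (Sum.inl (P n k j)) (Sum.inl (P n (k + dlt) j)),
      ∀ v ∈ w.support, v ∈ cross n i j := by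
  intro dlt
  induction dlt with
  | zero =>
    intro k hk1 hk2
    refine ⟨Walk.nil, ?_⟩
    intro v hv
    simp only [Walk.support_nil, List.mem_singleton] at hv
    subst hv
    exact Or.inr (Or.inr (Or.inl ⟨k, hk1, by omega, rfl⟩))
  | succ dlt ih =>
    intro k hk1 hk2
    obtain ⟨w, hw⟩ := ih k hk1 (by omega)
    have e1 := (adjV (show 1 ≤ k + dlt by omega) (show (k + dlt) + 1 ≤ n by omega) hj1 hj2).1
    have e2 := (adjV (show 1 ≤ k + dlt by omega) (show (k + dlt) + 1 ≤ n by omega) hj1 hj2).2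
    refine ⟨w.append (Walk.cons e1 (Walk.cons e2.symm Walk.nil)), ?_⟩
    intro v hv
    rcases support_append_sub _ _ v hv with h | h
    · exact hw v h
    · simp only [Walk.support_cons, Walk.support_nil, List.mem_cons,
        List.mem_singleton, List.not_mem_nil, or_false] at h
      rcases h with rfl | rfl | rfl
      · exact Or.inr (Or.inr (Or.inl ⟨k + dlt, by omega, by omega, rfl⟩))
      · exact Or.inr (Or.inr (Or.inr ⟨k + dlt, by omega, by omega, rfl⟩))
      · exact Or.inr (Or.inr (Or.inl ⟨k + dlt + 1, by omega, by omega, rfl⟩))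

lemma rowWalk {n i j : ℕ} (hi1 : 1 ≤ i) (hi2 : i ≤ n) {l l' : ℕ} (h1 : 1 ≤ l) (h2 : l ≤ n)
    (h3 : 1 ≤ l') (h4 : l' ≤ n) :
    ∃ w : (Fm n).inc.Walk (Sum.inl (P n i l)) (Sum.inl (P n i l')),
      ∀ v ∈ w.support, v ∈ cross n i j := by
  rcases le_total l l' with h | h
  · have E := rowSeg (j := j) hi1 hi2 (l' - l) l h1 (by omega)
    rw [show l + (l' - l) = l' by omega] at E
    exact E
  · have E := rowSeg (j := j) hi1 hi2 (l - l') l' h3 (by omega)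
    rw [show l' + (l - l') = l by omega] at E
    obtain ⟨w, hw⟩ := E
    exact ⟨w.reverse, fun v hv => hw v (by rwa [Walk.support_reverse, List.mem_reverse] at hv)⟩

lemma colWalk {n i j : ℕ} (hj1 : 1 ≤ j) (hj2 : j ≤ n) {k k' : ℕ} (h1 : 1 ≤ k) (h2 : k ≤ n)
    (h3 : 1 ≤ k') (h4 : k' ≤ n) :
    ∃ w : (Fm n).inc.Walk (Sum.inl (P n k j)) (Sum.inl (P n k' j)),
      ∀ v ∈ w.support, v ∈ cross n i j := by
  rcases le_total k k' with h | h
  · have E := colSeg (i := i) hj1 hj2 (k' - k) k h1 (by omega)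
    rw [show k + (k' - k) = k' by omega] at E
    exact E
  · have E := colSeg (i := i) hj1 hj2 (k - k') k' h3 (by omega)
    rw [show k' + (k - k') = k by omega] at E
    obtain ⟨w, hw⟩ := E
    exact ⟨w.reverse, fun v hv => hw v (by rwa [Walk.support_reverse, List.mem_reverse] at hv)⟩

lemma toCenter {n i j : ℕ} (hi1 : 1 ≤ i) (hi2 : i ≤ n) (hj1 : 1 ≤ j) (hj2 : j ≤ n)
    (a : ℕ ⊕ (ℕ × ℕ × Bool)) (ha : a ∈ cross n i j) :
    ∃ w : (Fm n).inc.Walk a (Sum.inl (P n i j)), ∀ v ∈ w.support, v ∈ cross n i j := by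
  rcases ha with ⟨l, h1, h2, rfl⟩ | ⟨l, h1, h2, rfl⟩ | ⟨k, h1, h2, rfl⟩ | ⟨k, h1, h2, rfl⟩
  · exact rowWalk hi1 hi2 h1 h2 hj1 hj2
  · obtain ⟨w, hw⟩ := rowWalk (j := j) hi1 hi2 h1 (by omega) hj1 hj2
    have e1 := (adjH hi1 hi2 h1 h2).1
    refine ⟨Walk.cons e1.symm w, ?_⟩
    intro v hv
    replace hv := List.mem_cons.mp hv
    rcases hv with rfl | hv
    · exact Or.inr (Or.inl ⟨l, h1, h2, rfl⟩)
    · exact hw v hv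
  · obtain ⟨w, hw⟩ := colWalk (i := i) hj1 hj2 h1 h2 hi1 hi2
    exact ⟨w, hw⟩
  · obtain ⟨w, hw⟩ := colWalk (i := i) hj1 hj2 h1 (by omega) hi1 hi2
    have e1 := (adjV h1 h2 hj1 hj2).1
    refine ⟨Walk.cons e1.symm w, ?_⟩
    intro v hv
    replace hv := List.mem_cons.mp hv
    rcases hv with rfl | hv
    · exact Or.inr (Or.inr (Or.inr ⟨k, h1, h2, rfl⟩))
    · exact hw v hv

lemma crossWalk {n i j : ℕ} (hi1 : 1 ≤ i) (hi2 : i ≤ n) (hj1 : 1 ≤ j) (hj2 : j ≤ n)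
    (a : ℕ ⊕ (ℕ × ℕ × Bool)) (ha : a ∈ cross n i j) (b : ℕ ⊕ (ℕ × ℕ × Bool))
    (hb : b ∈ cross n i j) :
    ∃ w : (Fm n).inc.Walk a b, ∀ v ∈ w.support, v ∈ cross n i j := by
  obtain ⟨wa, hwa⟩ := toCenter hi1 hi2 hj1 hj2 a ha
  obtain ⟨wb, hwb⟩ := toCenter hi1 hi2 hj1 hj2 b hb
  refine ⟨wa.append wb.reverse, ?_⟩
  intro v hv
  rcases support_append_sub _ _ v hv with h | h
  · exact hwa v h
  · exact hwb v (by erw [Walk.support_reverse, List.mem_reverse] at h; exact h)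

def rowOf (n : ℕ) : (ℕ ⊕ (ℕ × ℕ × Bool)) → ℕ
  | Sum.inl m => m / (n+1)
  | Sum.inr c => c.1

def colOf (n : ℕ) : (ℕ ⊕ (ℕ × ℕ × Bool)) → ℕ
  | Sum.inl m => m % (n+1)
  | Sum.inr c => c.2.1

lemma crossChar {n i j : ℕ} (hj2 : j ≤ n) (a : ℕ ⊕ (ℕ × ℕ × Bool)) (ha : a ∈ cross n i j) :
    rowOf n a = i ∨ colOf n a = j := by
  rcases ha with ⟨l, h1, h2, rfl⟩ | ⟨l, h1, h2, rfl⟩ | ⟨k, h1, h2, rfl⟩ | ⟨k, h1, h2, rfl⟩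
  · exact Or.inl (by simp [rowOf, Pdiv h2])
  · exact Or.inl rfl
  · exact Or.inr (by simp [colOf, Pmod hj2])
  · exact Or.inr rfl

lemma no_small_tw (n : ℕ) (hn : 2 ≤ n) (s : ℕ) (hs : s + 2 ≤ n) : ¬ twLE (Fm n).inc s := by
  classical
  rintro ⟨ιT, T, bag, hTree, hedge, hconn, hcard⟩
  -- subtrees of vertices
  set Sv : (ℕ ⊕ (ℕ × ℕ × Bool)) → Set ιT := fun v => {t | v ∈ bag t} with hSv
  have PC_S : ∀ v, PC T (Sv v) := by
    intro v a ha b hb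
    obtain ⟨p⟩ := (hconn v).preconnected ⟨a, ha⟩ ⟨b, hb⟩
    refine ⟨p.map (SimpleGraph.Embedding.induce {t | v ∈ bag t}).toHom, ?_⟩
    intro x hx
    erw [Walk.support_map, List.mem_map] at hx
    obtain ⟨u, hu, rfl⟩ := hx
    exact u.property
  have S_ne : ∀ v, (Sv v).Nonempty := by
    intro v
    obtain ⟨⟨t, ht⟩⟩ := (hconn v).nonempty
    exact ⟨t, ht⟩
  -- union subtrees over crosses
  set U : ℕ → ℕ → Set ιT := fun i j => ⋃ v ∈ cross n i j, Sv v with hU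
  have PC_U : ∀ i j, 1 ≤ i → i ≤ n → 1 ≤ j → j ≤ n → PC T (U i j) := by
    intro i j hi1 hi2 hj1 hj2
    have aux : ∀ {u u' : ℕ ⊕ (ℕ × ℕ × Bool)} (w : (Fm n).inc.Walk u u'),
        (∀ x ∈ w.support, x ∈ cross n i j) →
        ∀ t ∈ Sv u, ∀ t' ∈ Sv u', ∃ tw : T.Walk t t', ∀ z ∈ tw.support, z ∈ U i j := by
      intro u u' w
      induction w with
      | nil =>
        intro hsup t ht t' ht'
        obtain ⟨tw, htw⟩ := PC_S _ t ht t' ht'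
        refine ⟨tw, fun z hz => ?_⟩
        apply Set.mem_biUnion (hsup _ (Walk.start_mem_support _)) (htw z hz)
      | @cons u u₂ u' hadj w ih =>
        intro hsup t ht t' ht'
        obtain ⟨k, hk1, hk2⟩ := hedge _ _ hadj
        obtain ⟨tw1, htw1⟩ := PC_S u t ht k hk1
        obtain ⟨tw2, htw2⟩ := ih (fun x hx => hsup x (List.mem_cons_of_mem _ hx)) k hk2 t' ht'
        refine ⟨tw1.append tw2, fun z hz => ?_⟩
        rcases support_append_sub _ _ z hz with h | h
        · exact Set.mem_biUnion (hsup u (Walk.start_mem_support _)) (htw1 z h)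
        · exact htw2 z h
    intro t ht t' ht'
    rw [hU] at ht ht'
    simp only [Set.mem_iUnion] at ht ht'
    obtain ⟨u, hu, htu⟩ := ht
    obtain ⟨u', hu', htu'⟩ := ht'
    obtain ⟨w, hw⟩ := crossWalk hi1 hi2 hj1 hj2 u hu u' hu'
    exact aux w hw t htu t' htu'
  -- pairwise intersection
  have Upair : ∀ i j i' j', 1 ≤ i → i ≤ n → 1 ≤ j → j ≤ n → 1 ≤ i' → i' ≤ n → 1 ≤ j' → j' ≤ n →
      (U i j ∩ U i' j').Nonempty := by
    intro i j i' j' hi1 hi2 hj1 hj2 hi1' hi2' hj1' hj2'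
    obtain ⟨t, ht⟩ := S_ne (Sum.inl (P n i j'))
    refine ⟨t, ?_, ?_⟩
    · exact Set.mem_biUnion (Or.inl ⟨j', hj1', hj2', rfl⟩) ht
    · exact Set.mem_biUnion (Or.inr (Or.inr (Or.inl ⟨i, hi1, hi2, rfl⟩))) ht
  -- Helly
  set idx : Finset (ℕ × ℕ) := Finset.Icc 1 n ×ˢ Finset.Icc 1 n with hidx
  set L : List (Set ιT) := idx.toList.map (fun p => U p.1 p.2) with hL
  have idxmem : ∀ a b : ℕ, (a, b) ∈ idx ↔ (1 ≤ a ∧ a ≤ n) ∧ (1 ≤ b ∧ b ≤ n) := by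
    intro a b
    rw [hidx, Finset.mem_product]
    simp [Finset.mem_Icc]
  have memrange : ∀ p ∈ idx, 1 ≤ p.1 ∧ p.1 ≤ n ∧ 1 ≤ p.2 ∧ p.2 ≤ n := by
    intro p hp
    obtain ⟨a, b⟩ := p
    rw [idxmem] at hp
    exact ⟨hp.1.1, hp.1.2, hp.2.1, hp.2.2⟩
  have hLmem : ∀ S ∈ L, ∃ p ∈ idx, S = U p.1 p.2 := by
    intro S hS
    rw [hL, List.mem_map] at hS
    obtain ⟨p, hp, rfl⟩ := hS
    exact ⟨p, Finset.mem_toList.mp hp, rfl⟩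
  obtain ⟨t, htall⟩ := hellyList hTree.2 L.length L rfl
    (by
      have hpos : 0 < L.length := by
        rw [hL, List.length_map, Finset.length_toList]
        apply Finset.card_pos.mpr
        refine ⟨(1, 1), ?_⟩
        rw [idxmem]
        omega
      exact List.length_pos_iff.mp hpos)
    (by
      intro S hS
      obtain ⟨p, hp, rfl⟩ := hLmem S hS
      obtain ⟨a1, a2, a3, a4⟩ := memrange p hp
      exact PC_U p.1 p.2 a1 a2 a3 a4)
    (by
      intro S hS S' hS'
      obtain ⟨p, hp, rfl⟩ := hLmem S hS
      obtain ⟨p', hp', rfl⟩ := hLmem S' hS'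
      obtain ⟨a1, a2, a3, a4⟩ := memrange p hp
      obtain ⟨b1, b2, b3, b4⟩ := memrange p' hp'
      exact Upair _ _ _ _ a1 a2 a3 a4 b1 b2 b3 b4)
  have htU : ∀ i j, 1 ≤ i → i ≤ n → 1 ≤ j → j ≤ n → t ∈ U i j := by
    intro i j hi1 hi2 hj1 hj2
    apply htall
    rw [hL, List.mem_map]
    refine ⟨(i, j), Finset.mem_toList.mpr ?_, rfl⟩
    rw [idxmem]
    omega
  -- final counting
  set BR : Finset ℕ := (bag t).image (rowOf n) with hBR
  set BC : Finset ℕ := (bag t).image (colOf n) with hBC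
  have hBRcard : BR.card ≤ s + 1 := le_trans (Finset.card_image_le) (hcard t)
  have hBCcard : BC.card ≤ s + 1 := le_trans (Finset.card_image_le) (hcard t)
  have exR : ∃ i ∈ Finset.Icc 1 n, i ∉ BR := by
    by_contra h
    push_neg at h
    have : Finset.Icc 1 n ⊆ BR := fun i hi => h i hi
    have := Finset.card_le_card this
    rw [Nat.card_Icc] at this
    omega
  have exC : ∃ j ∈ Finset.Icc 1 n, j ∉ BC := by
    by_contra h
    push_neg at h
    have : Finset.Icc 1 n ⊆ BC := fun j hj => h j hj
    have := Finset.card_le_card this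
    rw [Nat.card_Icc] at this
    omega
  obtain ⟨i0, hi0, hi0n⟩ := exR
  obtain ⟨j0, hj0, hj0n⟩ := exC
  rw [Finset.mem_Icc] at hi0 hj0
  have ht0 := htU i0 j0 hi0.1 hi0.2 hj0.1 hj0.2
  rw [hU] at ht0
  simp only [Set.mem_iUnion] at ht0
  obtain ⟨v, hv, hvt⟩ := ht0
  rcases crossChar hj0.2 v hv with h | h
  · exact hi0n (by rw [hBR]; exact Finset.mem_image.mpr ⟨v, hvt, h⟩)
  · exact hj0n (by rw [hBC]; exact Finset.mem_image.mpr ⟨v, hvt, h⟩)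

end S18


/-- For every `w` there is a CNF formula `F` and a variable `x ∈ var(F)` such
that `{x}` is a strong `W_{≤1}`-backdoor set of `F` and `tw(inc(F)) ≥ w`. -/
theorem stmt18 (w : ℕ) :
    ∃ (F : CNF ℕ) (x : ℕ), x ∈ F.vars ∧ F.strongBackdoor 1 {x} ∧
      ∀ s : ℕ, s + 1 ≤ w → ¬ twLE F.inc s := by
  classical
  refine ⟨S18.Fm (2*w+2), 0, ?_, ?_, ?_⟩
  · -- 0 ∈ vars
    rw [CNF.vars, Finset.mem_biUnion]
    refine ⟨(1, 1, false), ?_, ?_⟩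
    · show (1, 1, false) ∈ S18.clsN (2*w+2)
      rw [S18.mem_clsN]
      refine ⟨le_refl 1, (by show (1:ℕ) ≤ 2*w+2; omega), le_refl 1,
        (by show (1:ℕ) ≤ 2*w+2; omega), ?_⟩
      rw [if_neg (by simp)]
      show (1:ℕ) + 1 ≤ 2*w+2
      omega
    · rw [Finset.mem_image]
      refine ⟨(0, true), ?_, rfl⟩
      show _ ∈ S18.litN (2*w+2) (1,1,false)
      unfold S18.litN
      rw [if_neg (by simp)]
      simp
  · constructor
    · rw [Finset.singleton_subset_iff]
      rw [CNF.vars, Finset.mem_biUnion]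
      refine ⟨(1, 1, false), ?_, ?_⟩
      · show (1, 1, false) ∈ S18.clsN (2*w+2)
        rw [S18.mem_clsN]
        refine ⟨le_refl 1, (by show (1:ℕ) ≤ 2*w+2; omega), le_refl 1,
          (by show (1:ℕ) ≤ 2*w+2; omega), ?_⟩
        rw [if_neg (by simp)]
        show (1:ℕ) + 1 ≤ 2*w+2
        omega
      · rw [Finset.mem_image]
        refine ⟨(0, true), ?_, rfl⟩
        show _ ∈ S18.litN (2*w+2) (1,1,false)
        unfold S18.litN
        rw [if_neg (by simp)]
        simp
    · intro τ
      exact S18.backdoor (2*w+2) τ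
  · intro s hs
    exact S18.no_small_tw (2*w+2) (by omega) s (by omega)
end Parent
end
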